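/- For a ring R and a fixed n ∈ ℕ, the following conditions are equivalent: (1) every n-generated projective right R-module is a CS-Rickart module; (2) the free right R-module R^(n) is a CS-Rickart module; (3) the matrix ring Mat_n(R) is a right ACS ring; (4) every n-generated right ideal of R has the form P ⊕ S, where P is a projective right R-module and S is a singular right ideal of R; (5) the right R-module R^(n) is relatively CS-Rickart to R_R; (6) every n-generated submodule of R^(n) has the form P₁ ⊕ … ⊕ Pₙ ⊕ S, where each P₁, …, Pₙ is a projective module isomorphic to a submodule of R_R and S is a singular module. -/

import Mathlib

namespace CSRickartPaper

section Defs

variable {R : Type*} [Ring R] {M : Type*} [AddCommGroup M] [Module R M]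

/-- `N` is an essential submodule of `P` (inside the ambient module `M`):
`N ≤ P` and every submodule of `P` intersecting `N` trivially is zero. -/
def EssentialIn (N P : Submodule R M) : Prop :=
  N ≤ P ∧ ∀ K : Submodule R M, K ≤ P → N ⊓ K = ⊥ → K = ⊥

/-- `N` is a small (superfluous) submodule of `P`. -/
def SmallIn (N P : Submodule R M) : Prop :=
  N ≤ P ∧ ∀ K : Submodule R M, K ≤ P → N ⊔ K = P → K = P

/-- `N` is a direct summand of `M`. -/
def IsDirectSummand (N : Submodule R M) : Prop :=
  ∃ K : Submodule R M, IsCompl N K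

/-- `N` lies above the direct summand `D` of `M`: `M = D ⊕ K`, `D ≤ N` and
`N ⊓ K` is small in `K`. -/
def LiesAbove (N D : Submodule R M) : Prop :=
  ∃ K : Submodule R M, IsCompl D K ∧ D ≤ N ∧ SmallIn (N ⊓ K) K

/-- `N` lies above a direct summand of `M`. -/
def LiesAboveSummand (N : Submodule R M) : Prop :=
  ∃ D : Submodule R M, LiesAbove N D

end Defs

section ModuleDefs

variable (R : Type*) [Ring R] (M : Type*) [AddCommGroup M] [Module R M]

/-- `M` is a CS-Rickart module: the kernel of every endomorphism is essential
in a direct summand `eM`, `e` an idempotent endomorphism. -/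
def IsCSRickart : Prop :=
  ∀ φ : Module.End R M, ∃ e : Module.End R M, IsIdempotentElem e ∧
    EssentialIn (LinearMap.ker φ) (LinearMap.range e)

/-- `M` is a d-CS-Rickart module: the image of every endomorphism lies above a
direct summand of `M`. -/
def IsDCSRickart : Prop :=
  ∀ φ : Module.End R M, LiesAboveSummand (LinearMap.range φ)

/-- `M` is a Rickart module. -/
def IsRickart : Prop :=
  ∀ φ : Module.End R M, ∃ e : Module.End R M, IsIdempotentElem e ∧
    LinearMap.ker φ = LinearMap.range e

/-- `M` is a dual Rickart module. -/
def IsDRickart : Prop :=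
  ∀ φ : Module.End R M, ∃ e : Module.End R M, IsIdempotentElem e ∧
    LinearMap.range φ = LinearMap.range e

/-- `M` is a CS (extending) module. -/
def IsCSModule : Prop :=
  ∀ N : Submodule R M, ∃ D : Submodule R M, IsDirectSummand D ∧ EssentialIn N D

/-- `M` is a lifting (d-CS) module. -/
def IsLifting : Prop :=
  ∀ N : Submodule R M, LiesAboveSummand N

/-- `M` is a singular module: the annihilator of every element is an essential
ideal of `R`. -/
def IsSingularModule : Prop :=
  ∀ m : M, EssentialIn (LinearMap.ker (LinearMap.toSpanSingleton R M m)) (⊤ : Submodule R R)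

/-- `M` is uniform: every nonzero submodule is essential. -/
def IsUniformModule : Prop :=
  ∀ N : Submodule R M, N ≠ ⊥ → EssentialIn N (⊤ : Submodule R M)

/-- `M` satisfies the C₂ condition: every submodule isomorphic to a direct
summand is itself a direct summand. -/
def IsC2 : Prop :=
  ∀ N D : Submodule R M, IsDirectSummand D → Nonempty (N ≃ₗ[R] D) → IsDirectSummand N

/-- `M` is K-nonsingular. -/
def IsKNonsingular : Prop :=
  ∀ φ : Module.End R M, ∀ N : Submodule R M, EssentialIn N (⊤ : Submodule R M) →
    N ≤ LinearMap.ker φ → φ = 0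

/-- `M` is T-noncosingular. -/
def IsTNoncosingular : Prop :=
  ∀ φ : Module.End R M, φ ≠ 0 → ¬ SmallIn (LinearMap.range φ) (⊤ : Submodule R M)

/-- `M` is an SIP-CS module. -/
def IsSIPCS : Prop :=
  ∀ A B : Submodule R M, IsDirectSummand A → IsDirectSummand B →
    ∃ D : Submodule R M, IsDirectSummand D ∧ EssentialIn (A ⊓ B) D

/-- `M` is an SSP-d-CS module. -/
def IsSSPdCS : Prop :=
  ∀ A B : Submodule R M, IsDirectSummand A → IsDirectSummand B →
    LiesAboveSummand (A ⊔ B)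

end ModuleDefs

section RelDefs

variable (R : Type*) [Ring R] (M N : Type*) [AddCommGroup M] [Module R M]
  [AddCommGroup N] [Module R N]

/-- `M` is relatively CS-Rickart to `N`. -/
def IsRelCSRickart : Prop :=
  ∀ φ : M →ₗ[R] N, ∃ e : Module.End R M, IsIdempotentElem e ∧
    EssentialIn (LinearMap.ker φ) (LinearMap.range e)

/-- `M` is relatively d-CS-Rickart to `N`. -/
def IsRelDCSRickart : Prop :=
  ∀ φ : M →ₗ[R] N, LiesAboveSummand (LinearMap.range φ)

/-- `N` is `M`-injective. -/
def IsRelInjective : Prop :=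
  ∀ (A : Submodule R M) (f : A →ₗ[R] N), ∃ g : M →ₗ[R] N, ∀ a : A, g a = f a

end RelDefs

section RingDefs

variable (R : Type*) [Ring R]

/-- The annihilator of an element `a` of `R`, as an ideal (kernel of `r ↦ r • a`). -/
def annElem (a : R) : Submodule R R :=
  LinearMap.ker (LinearMap.toSpanSingleton R R a)

/-- The annihilator of a subset `X` of `R`. -/
def annSet (X : Set R) : Submodule R R :=
  ⨅ x ∈ X, annElem R x

/-- The principal ideal generated by `e`, i.e. the image of `r ↦ r • e`. -/
def idealGen (e : R) : Submodule R R :=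
  LinearMap.range (LinearMap.toSpanSingleton R R e)

/-- `R` is an ACS ring: the annihilator of every element is essential in a
direct summand `eR` of `R`. -/
def IsACSRing : Prop :=
  ∀ a : R, ∃ e : R, IsIdempotentElem e ∧ EssentialIn (annElem R a) (idealGen R e)

/-- `R` is an essentially Baer ring. -/
def IsEssentiallyBaer : Prop :=
  ∀ X : Set R, X.Nonempty → ∃ e : R, IsIdempotentElem e ∧
    EssentialIn (annSet R X) (idealGen R e)

/-- The Jacobson radical of the ring `R`. -/
noncomputable def jacRad : Ideal R := Ideal.jacobson (⊥ : Ideal R)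

/-- `R` is semiregular: `R/J(R)` is von Neumann regular and idempotents lift
modulo `J(R)` (stated elementwise). -/
def IsSemiregularRing : Prop :=
  (∀ a : R, ∃ b : R, a - a * b * a ∈ jacRad R) ∧
  (∀ a : R, a - a * a ∈ jacRad R →
    ∃ e : R, IsIdempotentElem e ∧ e - a ∈ jacRad R)

/-- `J(R)` coincides with the singular ideal `Z(R)`. -/
def JacEqSingular : Prop :=
  ∀ a : R, a ∈ jacRad R ↔ EssentialIn (annElem R a) (⊤ : Submodule R R)

end RingDefs

section GenDefs

variable {R : Type*} [Ring R] {M : Type*} [AddCommGroup M] [Module R M]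

/-- A submodule is `n`-generated if it is spanned by at most `n` elements. -/
def NGen (n : ℕ) (N : Submodule R M) : Prop :=
  ∃ f : Fin n → M, Submodule.span R (Set.range f) = N

end GenDefs

end CSRickartPaper

namespace CSRickartPaper

universe u

section Infra1

open Submodule LinearMap

variable {R : Type*} [Ring R] {M : Type*} [AddCommGroup M] [Module R M]
  {N' : Type*} [AddCommGroup N'] [Module R N']

theorem essIn_of_subsingleton [Subsingleton M] (A B : Submodule R M) : EssentialIn A B := by
  constructor
  · intro x hx
    rw [Subsingleton.elim x (0 : M)]
    exact B.zero_mem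
  · intro K _ _
    rw [Submodule.eq_bot_iff]
    intro x _
    exact Subsingleton.elim x 0

theorem ess_top_top : EssentialIn (⊤ : Submodule R M) ⊤ := by
  refine ⟨le_rfl, fun K _ h => ?_⟩
  rwa [top_inf_eq] at h

theorem EssentialIn.mono_left {A A' B : Submodule R M} (h : EssentialIn A B)
    (h1 : A ≤ A') (h2 : A' ≤ B) : EssentialIn A' B := by
  refine ⟨h2, fun K hK hKA => h.2 K hK ?_⟩
  exact le_bot_iff.mp ((inf_le_inf_right K h1).trans hKA.le)

theorem EssentialIn.trans {A B C : Submodule R M} (h1 : EssentialIn A B)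
    (h2 : EssentialIn B C) : EssentialIn A C := by
  refine ⟨h1.1.trans h2.1, fun K hK hKA => ?_⟩
  refine h2.2 K hK (h1.2 (B ⊓ K) inf_le_left ?_)
  rw [← inf_assoc, inf_eq_left.mpr h1.1]
  exact hKA

theorem EssentialIn.inf {A B C : Submodule R M} (h : EssentialIn A B) (hC : C ≤ B) :
    EssentialIn (A ⊓ C) C := by
  refine ⟨inf_le_right, fun K hK hKA => ?_⟩
  refine h.2 K (hK.trans hC) ?_
  rw [show A ⊓ K = A ⊓ C ⊓ K by rw [inf_assoc, inf_eq_right.mpr hK]]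
  exact hKA

theorem EssentialIn.map_inj {A B : Submodule R M} (ψ : M →ₗ[R] N') (hψ : Function.Injective ψ)
    (h : EssentialIn A B) : EssentialIn (A.map ψ) (B.map ψ) := by
  refine ⟨Submodule.map_mono h.1, fun K hK hKA => ?_⟩
  have h1 : A ⊓ (Submodule.comap ψ K ⊓ B) = ⊥ := by
    rw [Submodule.eq_bot_iff]
    rintro x ⟨hxA, hxK, hxB⟩
    have hx : ψ x ∈ A.map ψ ⊓ K := ⟨⟨x, hxA, rfl⟩, hxK⟩
    rw [hKA] at hx
    have : ψ x = ψ 0 := by simpa using hx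
    exact hψ this
  have h2 := h.2 (Submodule.comap ψ K ⊓ B) inf_le_right h1
  rw [Submodule.eq_bot_iff]
  intro y hyK
  obtain ⟨x, hxB, rfl⟩ := hK hyK
  have hx : x ∈ Submodule.comap ψ K ⊓ B := ⟨hyK, hxB⟩
  rw [h2] at hx
  rw [show x = 0 from hx, map_zero]

theorem essentialIn_of_map_inj {A B : Submodule R M} (ψ : M →ₗ[R] N')
    (hψ : Function.Injective ψ) (hAB : A ≤ B) (h : EssentialIn (A.map ψ) (B.map ψ)) :
    EssentialIn A B := by
  refine ⟨hAB, fun K hK hKA => ?_⟩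
  have h2 := h.2 (K.map ψ) (Submodule.map_mono hK)
    (by rw [← Submodule.map_inf ψ hψ, hKA, Submodule.map_bot])
  rw [Submodule.eq_bot_iff]
  intro x hx
  have : ψ x ∈ K.map ψ := ⟨x, hx, rfl⟩
  rw [h2] at this
  exact hψ (by simpa using this)

theorem ess_sup_half {A B C : Submodule R M} (h : EssentialIn A B) (hBC : B ⊓ C = ⊥) :
    EssentialIn (A ⊔ C) (B ⊔ C) := by
  refine ⟨sup_le_sup_right h.1 C, fun K hK hKA => ?_⟩
  have hN : (K ⊔ C) ⊓ B = ⊥ := by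
    refine h.2 _ inf_le_right ?_
    rw [Submodule.eq_bot_iff]
    rintro x ⟨hxA, hxKC, hxB⟩
    obtain ⟨k, hk, c, hc, hkc⟩ := Submodule.mem_sup.mp hxKC
    have hkmem : k ∈ (A ⊔ C) ⊓ K := by
      refine ⟨?_, hk⟩
      have : k = x - c := by rw [← hkc]; abel
      rw [this]
      exact Submodule.sub_mem _ (le_sup_left (a := A) (b := C) hxA)
        (le_sup_right (a := A) (b := C) hc)
    rw [hKA] at hkmem
    have hk0 : k = 0 := hkmem
    have : x = c := by rw [← hkc, hk0, zero_add]
    have hxmem : x ∈ B ⊓ C := ⟨hxB, this ▸ hc⟩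
    rw [hBC] at hxmem
    exact hxmem
  have hKC : K ≤ C := by
    have e1 : (C ⊔ K) ⊓ (B ⊔ C) = C ⊔ K ⊓ (B ⊔ C) :=
      sup_inf_assoc_of_le _ le_sup_right
    have e2 : K ⊓ (B ⊔ C) = K := inf_eq_left.mpr hK
    have e3 : (C ⊔ K) ⊓ (B ⊔ C) = C ⊔ K := by rw [e1, e2]
    -- also (C ⊔ K) ⊓ B = ⊥ from hN (sup comm)
    have e4 : (C ⊔ K) ⊓ B = ⊥ := by rwa [sup_comm C K]
    -- modular: C ≤ C ⊔ K so (C ⊔ K) ⊓ (B ⊔ C) = ((C ⊔ K) ⊓ B) ⊔ C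
    have e5 : (C ⊔ K) ⊓ (B ⊔ C) = (C ⊔ K) ⊓ B ⊔ C :=
      (inf_sup_assoc_of_le B (le_sup_left : C ≤ C ⊔ K)).symm
    rw [e3, e4, bot_sup_eq] at e5
    calc K ≤ C ⊔ K := le_sup_right
    _ = C := e5
  have : K = (A ⊔ C) ⊓ K := (inf_eq_right.mpr (hKC.trans le_sup_right)).symm
  rw [this, hKA]

theorem ess_sup_step {A B C D : Submodule R M} (h1 : EssentialIn A B)
    (h2 : EssentialIn C D) (hBD : B ⊓ D = ⊥) : EssentialIn (A ⊔ C) (B ⊔ D) := by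
  have hBC : B ⊓ C = ⊥ :=
    le_bot_iff.mp ((inf_le_inf_left B h2.1).trans hBD.le)
  have s1 : EssentialIn (A ⊔ C) (B ⊔ C) := ess_sup_half h1 hBC
  have hDB : D ⊓ B = ⊥ := by rwa [inf_comm]
  have s2 : EssentialIn (C ⊔ B) (D ⊔ B) := ess_sup_half h2 hDB
  rw [sup_comm C B, sup_comm D B] at s2
  exact s1.trans s2

theorem ess_inf_top {A B : Submodule R M} (hA : EssentialIn A ⊤) (hB : EssentialIn B ⊤) :
    EssentialIn (A ⊓ B) ⊤ := by
  exact (hA.inf le_top).trans hB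

theorem ess_comap_toSpan {A E : Submodule R M} (h : EssentialIn A E) {u : M} (hu : u ∈ E) :
    EssentialIn (A.comap (LinearMap.toSpanSingleton R M u)) (⊤ : Submodule R R) := by
  set ψ := LinearMap.toSpanSingleton R M u with hψ
  refine ⟨le_top, fun K _ hKA => ?_⟩
  have h1 : A ⊓ K.map ψ = ⊥ := by
    rw [Submodule.eq_bot_iff]
    rintro x ⟨hxA, r, hrK, rfl⟩
    have : r ∈ A.comap ψ ⊓ K := ⟨hxA, hrK⟩
    rw [hKA] at this
    rw [show r = (0:R) from this, map_zero]
  have h2 : K.map ψ ≤ E := by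
    rintro x ⟨r, _, rfl⟩
    exact E.smul_mem r hu
  have h3 := h.2 _ h2 h1
  rw [Submodule.eq_bot_iff]
  intro r hr
  have hm : ψ r ∈ K.map ψ := ⟨r, hr, rfl⟩
  rw [h3] at hm
  have hrc : r ∈ A.comap ψ := by
    have : ψ r = 0 := hm
    show ψ r ∈ A
    rw [this]; exact A.zero_mem
  have : r ∈ A.comap ψ ⊓ K := ⟨hrc, hr⟩
  rw [hKA] at this
  exact this

end Infra1

section Infra2

open Submodule LinearMap

variable {R : Type*} [Ring R] {M : Type*} [AddCommGroup M] [Module R M]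
  {N' : Type*} [AddCommGroup N'] [Module R N']

theorem idem_fix {e : Module.End R M} (he : e * e = e) {x : M}
    (hx : x ∈ LinearMap.range e) : e x = x := by
  obtain ⟨y, rfl⟩ := hx
  have := DFunLike.congr_fun he y
  simpa [Module.End.mul_apply] using this

theorem idem_isCompl {e : Module.End R M} (he : e * e = e) :
    IsCompl (LinearMap.range e) (LinearMap.ker e) := by
  constructor
  · rw [disjoint_iff, Submodule.eq_bot_iff]
    rintro x ⟨hxr, hxk⟩
    have h1 : e x = x := idem_fix he hxr
    have h2 : e x = 0 := hxk
    rw [← h1, h2]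
  · rw [codisjoint_iff, eq_top_iff]
    intro x _
    refine Submodule.mem_sup.mpr ⟨e x, ⟨x, rfl⟩, x - e x, ?_, by abel⟩
    show e (x - e x) = 0
    rw [map_sub, idem_fix he ⟨x, rfl⟩, sub_self]

theorem ker_idem_eq_range {e : Module.End R M} (he : e * e = e) :
    LinearMap.ker e = LinearMap.range (1 - e) := by
  ext x
  constructor
  · intro hx
    refine ⟨x, ?_⟩
    have : e x = 0 := hx
    show x - e x = x
    rw [this, sub_zero]
  · rintro ⟨y, rfl⟩
    show e (y - e y) = 0
    rw [map_sub, idem_fix he ⟨y, rfl⟩, sub_self]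

theorem exists_idem_range {p q : Submodule R M} (h : IsCompl p q) :
    ∃ e : Module.End R M, IsIdempotentElem e ∧ LinearMap.range e = p := by
  refine ⟨p.subtype ∘ₗ p.projectionOnto q h, ?_, ?_⟩
  · show _ * _ = _
    ext x
    show (p.subtype ∘ₗ p.projectionOnto q h)
        ((p.subtype ∘ₗ p.projectionOnto q h) x) = _
    simp [Submodule.projectionOnto_apply_left h]
  · apply le_antisymm
    · rintro y ⟨x, rfl⟩
      exact (p.projectionOnto q h x).2
    · intro y hy
      exact ⟨y, by simp [Submodule.projectionOnto_apply_left h ⟨y, hy⟩]⟩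

/-- The splitting lemma: subtracting a "partial projection" `τ` from an idempotent `ε`. -/
theorem split_idem {ε τ : Module.End R M} (hεε : ε * ε = ε) (hττ : τ * τ = τ)
    (hετ : ε * τ = τ) (hτε : τ * ε = τ) :
    IsIdempotentElem (ε - τ) ∧
      LinearMap.range (ε - τ) = LinearMap.range ε ⊓ LinearMap.ker τ ∧
      LinearMap.range (ε - τ) ⊓ LinearMap.range τ = ⊥ ∧
      LinearMap.range (ε - τ) ⊔ LinearMap.range τ = LinearMap.range ε := by
  have happly : ∀ (f g : Module.End R M) (x : M), (f * g) x = f (g x) := fun _ _ _ => rfl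
  have key : ∀ x, (ε - τ) x = ε x - τ x := fun x => rfl
  have hrange : LinearMap.range (ε - τ) = LinearMap.range ε ⊓ LinearMap.ker τ := by
    apply le_antisymm
    · rintro y ⟨x, rfl⟩
      constructor
      · refine ⟨ε x - τ x, ?_⟩
        rw [map_sub, idem_fix hεε ⟨x, rfl⟩, show ε (τ x) = τ x from DFunLike.congr_fun hετ x,
          key]
      · show τ (ε x - τ x) = 0
        rw [map_sub, show τ (ε x) = τ x from DFunLike.congr_fun hτε x,
          show τ (τ x) = τ x from DFunLike.congr_fun hττ x, sub_self]
    · rintro x ⟨hxr, hxk⟩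
      refine ⟨x, ?_⟩
      rw [key, idem_fix hεε hxr, show τ x = 0 from hxk, sub_zero]
  refine ⟨?_, hrange, ?_, ?_⟩
  · show (ε - τ) * (ε - τ) = ε - τ
    rw [mul_sub, sub_mul, sub_mul, hεε, hττ, hετ, hτε]
    abel
  · rw [hrange, Submodule.eq_bot_iff]
    rintro x ⟨⟨_, hxk⟩, y, rfl⟩
    have h2 : τ (τ y) = τ y := DFunLike.congr_fun hττ y
    have : τ y = 0 := by rw [← h2]; exact hxk
    exact this
  · apply le_antisymm
    · refine sup_le ?_ ?_
      · rw [hrange]; exact inf_le_left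
      · rintro y ⟨x, rfl⟩
        exact ⟨τ x, by rw [show ε (τ x) = τ x from DFunLike.congr_fun hετ x]⟩
    · rintro y ⟨x, rfl⟩
      refine Submodule.mem_sup.mpr ⟨(ε - τ) (ε x), ⟨ε x, rfl⟩, τ x, ⟨x, rfl⟩, ?_⟩
      rw [key, idem_fix hεε ⟨x, rfl⟩, show τ (ε x) = τ x from DFunLike.congr_fun hτε x]
      abel

theorem ngen_top_pi {n : ℕ} : NGen n (⊤ : Submodule R (Fin n → R)) :=
  ⟨⇑(Pi.basisFun R (Fin n)), Module.Basis.span_eq _⟩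

theorem NGen.map {n : ℕ} {K : Submodule R M} (h : NGen n K) (ψ : M →ₗ[R] N') :
    NGen n (K.map ψ) := by
  obtain ⟨f, hf⟩ := h
  exact ⟨⇑ψ ∘ f, by rw [Set.range_comp, ← Submodule.map_span, hf]⟩

theorem ngen_range {n : ℕ} (g : (Fin n → R) →ₗ[R] N') : NGen n (LinearMap.range g) := by
  rw [LinearMap.range_eq_map]
  exact ngen_top_pi.map g

/-- The "finite linear combination" map, linear over a noncommutative ring. -/
def combo {n : ℕ} (f : Fin n → M) : (Fin n → R) →ₗ[R] M where
  toFun c := ∑ i, c i • f i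
  map_add' c d := by
    simp [add_smul, Finset.sum_add_distrib]
  map_smul' r c := by
    simp [mul_smul, Finset.smul_sum]

theorem combo_apply {n : ℕ} (f : Fin n → M) (c : Fin n → R) :
    combo (R := R) f c = ∑ i, c i • f i := rfl

theorem combo_single {n : ℕ} (f : Fin n → M) (i : Fin n) :
    combo (R := R) f (Pi.single i 1) = f i := by
  rw [combo_apply, Finset.sum_eq_single i]
  · simp
  · intro j _ hj
    rw [Pi.single_eq_of_ne hj, zero_smul]
  · simp

theorem combo_range {n : ℕ} (f : Fin n → M) :
    LinearMap.range (combo (R := R) f) = Submodule.span R (Set.range f) := by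
  apply le_antisymm
  · rintro y ⟨c, rfl⟩
    rw [combo_apply]
    exact Submodule.sum_mem _ fun i _ =>
      Submodule.smul_mem _ _ (Submodule.subset_span ⟨i, rfl⟩)
  · rw [Submodule.span_le]
    rintro y ⟨i, rfl⟩
    show f i ∈ LinearMap.range (combo (R := R) f)
    exact ⟨Pi.single i 1, combo_single f i⟩

theorem projective_bot : Module.Projective R (⊥ : Submodule R M) :=
  Module.projective_def.mpr ⟨0, fun x => Subsingleton.elim _ x⟩

theorem projective_range_idem {e : Module.End R M} (he : e * e = e)
    [Module.Projective R M] : Module.Projective R (LinearMap.range e) := by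
  refine Module.Projective.of_split (LinearMap.range e).subtype
    (LinearMap.codRestrict (LinearMap.range e) e fun x => ⟨x, rfl⟩) ?_
  apply LinearMap.ext
  intro x
  apply Subtype.ext
  show e (x : M) = (x : M)
  exact idem_fix he x.2

theorem projective_ker_idem {e : Module.End R M} (he : e * e = e)
    [Module.Projective R M] : Module.Projective R (LinearMap.ker e) := by
  have h1 : IsIdempotentElem (1 - e) := IsIdempotentElem.one_sub he
  have := projective_range_idem (M := M) (R := R) h1.eq
  rwa [← ker_idem_eq_range he] at this

theorem bot_equiv_bot : Nonempty ((⊥ : Submodule R M) ≃ₗ[R] (⊥ : Submodule R N')) :=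
  ⟨{ toFun := fun _ => 0
     map_add' := fun _ _ => Subsingleton.elim _ _
     map_smul' := fun _ _ => Subsingleton.elim _ _
     invFun := fun _ => 0
     left_inv := fun _ => Subsingleton.elim _ _
     right_inv := fun _ => Subsingleton.elim _ _ }⟩

end Infra2

section Infra3

open Submodule LinearMap

variable {R : Type*} [Ring R] {M : Type*} [AddCommGroup M] [Module R M]
  {N' : Type*} [AddCommGroup N'] [Module R N']

theorem toSpan_injective_single {n : ℕ} (i : Fin n) :
    Function.Injective (LinearMap.toSpanSingleton R (Fin n → R) (Pi.single i 1)) := by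
  intro r s h
  have := congrFun h i
  simpa using this

/-- Lemma Q: if every "coset annihilator" of a submodule `A` of a finite free module
is essential in `R`, then `A` is essential. -/
theorem ess_top_of_cosets {n : ℕ} {A : Submodule R (Fin n → R)}
    (h : ∀ x : Fin n → R,
      EssentialIn (A.comap (LinearMap.toSpanSingleton R (Fin n → R) x)) (⊤ : Submodule R R)) :
    EssentialIn A (⊤ : Submodule R (Fin n → R)) := by
  classical
  have hAB : ∀ i : Fin n, EssentialIn
      ((A.comap (LinearMap.toSpanSingleton R (Fin n → R) (Pi.single i 1))).map
        (LinearMap.toSpanSingleton R (Fin n → R) (Pi.single i 1)))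
      (LinearMap.range (LinearMap.toSpanSingleton R (Fin n → R) (Pi.single i 1))) := by
    intro i
    have := (h (Pi.single i 1)).map_inj _ (toSpan_injective_single i)
    rwa [Submodule.map_top] at this
  set Aa : Fin n → Submodule R (Fin n → R) := fun i =>
    (A.comap (LinearMap.toSpanSingleton R (Fin n → R) (Pi.single i 1))).map
      (LinearMap.toSpanSingleton R (Fin n → R) (Pi.single i 1)) with hAadef
  set Bb : Fin n → Submodule R (Fin n → R) := fun i =>
    LinearMap.range (LinearMap.toSpanSingleton R (Fin n → R) (Pi.single i 1)) with hBbdef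
  have hAle : ∀ i, Aa i ≤ A := by
    rintro i x ⟨r, hr, rfl⟩
    exact hr
  have hBker : ∀ (i j : Fin n), j ≠ i →
      Bb i ≤ LinearMap.ker (LinearMap.proj (R := R) (φ := fun _ : Fin n => R) j) := by
    rintro i j hij z ⟨t, rfl⟩
    rw [LinearMap.mem_ker]
    show (t • (Pi.single i (1:R) : Fin n → R)) j = 0
    rw [Pi.smul_apply, Pi.single_eq_of_ne hij, smul_zero]
  have hBsupp : ∀ (s : Finset (Fin n)) (j : Fin n), j ∉ s → (⨆ i ∈ s, Bb i) ⊓ Bb j = ⊥ := by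
    intro s j hj
    rw [Submodule.eq_bot_iff]
    rintro x ⟨hxs, hxj⟩
    have hle : (⨆ i ∈ s, Bb i) ≤ LinearMap.ker (LinearMap.proj (R := R) (φ := fun _ : Fin n => R) j) := by
      refine iSup_le fun i => iSup_le fun hi => hBker i j fun hh => hj (hh ▸ hi)
    have hxj0 : x j = 0 := hle hxs
    obtain ⟨r, rfl⟩ := hxj
    have : r = 0 := by
      have := hxj0
      rw [show (LinearMap.toSpanSingleton R (Fin n → R) (Pi.single j 1)) r
          = r • (Pi.single j (1:R) : Fin n → R) from rfl] at this
      simpa using this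
    rw [this, map_zero]
  have key : ∀ s : Finset (Fin n), EssentialIn (⨆ i ∈ s, Aa i) (⨆ i ∈ s, Bb i) := by
    intro s
    induction s using Finset.induction_on with
    | empty =>
      have e1 : (⨆ i ∈ (∅ : Finset (Fin n)), Aa i) = ⊥ := by simp
      have e2 : (⨆ i ∈ (∅ : Finset (Fin n)), Bb i) = ⊥ := by simp
      rw [e1, e2]
      exact ⟨le_rfl, fun K hK _ => le_bot_iff.mp hK⟩
    | @insert j s hj ih =>
      rw [Finset.iSup_insert, Finset.iSup_insert]
      have hd : Bb j ⊓ (⨆ i ∈ s, Bb i) = ⊥ := by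
        rw [inf_comm]; exact hBsupp s j hj
      exact ess_sup_step (hAB j) ih hd
  have huniv : (⨆ i ∈ Finset.univ, Bb i) = (⊤ : Submodule R (Fin n → R)) := by
    rw [eq_top_iff]
    intro x _
    have hsingle : ∀ i : Fin n, (Pi.single i (x i) : Fin n → R) ∈ Bb i := by
      intro i
      refine ⟨x i, funext fun j => ?_⟩
      rw [LinearMap.toSpanSingleton_apply]
      rcases eq_or_ne j i with rfl | hji
      · simp
      · simp [Pi.single_eq_of_ne hji]
    have hx : x = ∑ i, (Pi.single i (x i) : Fin n → R) := (Finset.univ_sum_single x).symm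
    rw [hx]
    exact Submodule.sum_mem _ fun i _ =>
      (le_iSup₂ (f := fun i (_ : i ∈ Finset.univ) => Bb i) i (Finset.mem_univ i)) (hsingle i)
  have hfinal := key Finset.univ
  rw [huniv] at hfinal
  exact hfinal.mono_left (iSup_le fun i => iSup_le fun _ => hAle i) le_top

/-- Lemma P. -/
theorem ess_in_idem_range {n : ℕ} {ε : Module.End R (Fin n → R)} (hε : ε * ε = ε)
    {A : Submodule R (Fin n → R)} (hA : A ≤ LinearMap.range ε)
    (hsing : ∀ k ∈ LinearMap.range ε,
      EssentialIn (A.comap (LinearMap.toSpanSingleton R (Fin n → R) k)) (⊤ : Submodule R R)) :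
    EssentialIn A (LinearMap.range ε) := by
  have hmem : ∀ x : Fin n → R, x ∈ A ⊔ LinearMap.ker ε ↔ ε x ∈ A := by
    intro x
    constructor
    · intro hx
      obtain ⟨a, ha, w, hw, rfl⟩ := Submodule.mem_sup.mp hx
      rw [map_add, show ε w = 0 from hw, add_zero, idem_fix hε (hA ha)]
      exact ha
    · intro hx
      refine Submodule.mem_sup.mpr ⟨ε x, hx, x - ε x, ?_, by abel⟩
      show ε (x - ε x) = 0
      rw [map_sub, idem_fix hε ⟨x, rfl⟩, sub_self]
  have hcosets : ∀ x : Fin n → R,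
      EssentialIn ((A ⊔ LinearMap.ker ε).comap
        (LinearMap.toSpanSingleton R (Fin n → R) x)) (⊤ : Submodule R R) := by
    intro x
    have heq : (A ⊔ LinearMap.ker ε).comap (LinearMap.toSpanSingleton R (Fin n → R) x)
        = A.comap (LinearMap.toSpanSingleton R (Fin n → R) (ε x)) := by
      ext r
      show r • x ∈ A ⊔ LinearMap.ker ε ↔ r • ε x ∈ A
      rw [hmem, map_smul]
    rw [heq]
    exact hsing (ε x) ⟨x, rfl⟩
  have h1 : EssentialIn (A ⊔ LinearMap.ker ε) ⊤ := ess_top_of_cosets hcosets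
  have h2 : A = (A ⊔ LinearMap.ker ε) ⊓ LinearMap.range ε := by
    apply le_antisymm
    · exact le_inf le_sup_left hA
    · rintro x ⟨hx1, hx2⟩
      have hx1' : ε x ∈ A := (hmem x).mp hx1
      rwa [idem_fix hε hx2] at hx1'
  rw [h2]
  exact h1.inf le_top

/-- Extending an independent family by a new piece disjoint from the old total. -/
theorem iSupIndep_extend {ι : Type*} [DecidableEq ι] {f : ι → Submodule R M}
    (hf : iSupIndep f) {j : ι} (hj : f j = ⊥) {A : Submodule R M}
    (hA : A ⊓ (⨆ i, f i) = ⊥) : iSupIndep (Function.update f j A) := by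
  intro o
  rcases eq_or_ne o j with rfl | ho
  · rw [Function.update_self]
    have hle : (⨆ o' : ι, ⨆ _ : o' ≠ o, Function.update f o A o') ≤ ⨆ i, f i := by
      refine iSup_le fun o' => iSup_le fun ho' => ?_
      rw [Function.update_of_ne ho']
      exact le_iSup f o'
    exact (disjoint_iff.mpr hA).mono_right hle
  · rw [Function.update_of_ne ho]
    have hC : Disjoint (f o) (⨆ o' : ι, ⨆ _ : o' ≠ o, f o') := hf o
    rw [disjoint_iff] at hC
    set C : Submodule R M := ⨆ o' : ι, ⨆ _ : o' ≠ o, f o' with hCdef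
    have hle : (⨆ o' : ι, ⨆ _ : o' ≠ o, Function.update f j A o') ≤ A ⊔ C := by
      refine iSup_le fun o' => iSup_le fun ho' => ?_
      rcases eq_or_ne o' j with rfl | h2
      · rw [Function.update_self]; exact le_sup_left
      · rw [Function.update_of_ne h2]
        exact le_trans (le_iSup₂ (f := fun o' (_ : o' ≠ o) => f o') o' ho') le_sup_right
    have hCB : C ≤ ⨆ i, f i := iSup_le fun o' => iSup_le fun _ => le_iSup f o'
    have hstep : (C ⊔ A) ⊓ (⨆ i, f i) = C := by
      rw [sup_inf_assoc_of_le A hCB, hA, sup_bot_eq]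
    have hfoB : f o ≤ ⨆ i, f i := le_iSup f o
    have hkey : f o ⊓ (A ⊔ C) = ⊥ := by
      have e1 : f o ⊓ (A ⊔ C) = f o ⊓ ((⨆ i, f i) ⊓ (A ⊔ C)) := by
        rw [← inf_assoc, inf_eq_left.mpr hfoB]
      rw [e1, inf_comm (⨆ i, f i) (A ⊔ C), sup_comm A C, hstep, hC]
    rw [disjoint_iff]
    exact le_bot_iff.mp (le_trans (inf_le_inf_left (f o) hle) hkey.le)

theorem isCompl_comap_subtype {p q N : Submodule R M} (hpq : p ⊓ q = ⊥) (hsup : p ⊔ q = N) :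
    IsCompl (p.comap N.subtype) (q.comap N.subtype) := by
  have hpN : p ≤ N := hsup ▸ le_sup_left
  have hqN : q ≤ N := hsup ▸ le_sup_right
  constructor
  · rw [disjoint_iff, Submodule.eq_bot_iff]
    rintro x ⟨hx1, hx2⟩
    have : (x : M) ∈ p ⊓ q := ⟨hx1, hx2⟩
    rw [hpq] at this
    exact Subtype.ext this
  · rw [codisjoint_iff, eq_top_iff]
    rintro ⟨y, hy⟩ _
    have hy' : y ∈ p ⊔ q := hsup.symm ▸ hy
    obtain ⟨a, ha, b, hb, hab⟩ := Submodule.mem_sup.mp hy'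
    refine Submodule.mem_sup.mpr ⟨⟨a, hpN ha⟩, ha, ⟨b, hqN hb⟩, hb, ?_⟩
    exact Subtype.ext hab

/-- A finite independent supremum of projective submodules is projective. -/
theorem projective_iSup {n : ℕ} {P : Fin n → Submodule R M}
    (hproj : ∀ i, Module.Projective R (P i))
    (hind : ∀ (j : Fin n) (s : Finset (Fin n)), j ∉ s → P j ⊓ (⨆ i ∈ s, P i) = ⊥) :
    Module.Projective R ↥(⨆ i, P i) := by
  classical
  have key : ∀ s : Finset (Fin n), Module.Projective R ↥(⨆ i ∈ s, P i) := by
    intro s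
    induction s using Finset.induction_on with
    | empty =>
      have e1 : (⨆ i ∈ (∅ : Finset (Fin n)), P i) = ⊥ := by simp
      rw [e1]
      exact projective_bot
    | @insert j s hj ih =>
      rw [Finset.iSup_insert]
      have hd : P j ⊓ (⨆ i ∈ s, P i) = ⊥ := hind j s hj
      have hcompl := isCompl_comap_subtype (N := P j ⊔ ⨆ i ∈ s, P i) hd rfl
      haveI h1 : Module.Projective R ↥((P j).comap (P j ⊔ ⨆ i ∈ s, P i).subtype) := by
        haveI := hproj j
        exact Module.Projective.of_equiv (Submodule.comapSubtypeEquivOfLe le_sup_left).symm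
      haveI h2 : Module.Projective R ↥((⨆ i ∈ s, P i).comap (P j ⊔ ⨆ i ∈ s, P i).subtype) := by
        haveI := ih
        exact Module.Projective.of_equiv (Submodule.comapSubtypeEquivOfLe le_sup_right).symm
      exact Module.Projective.of_equiv (Submodule.prodEquivOfIsCompl _ _ hcompl)
  have hkey := key Finset.univ
  have heq : (⨆ i ∈ Finset.univ, P i) = ⨆ i, P i := by simp
  rwa [heq] at hkey

end Infra3

section Imps1

open Submodule LinearMap

variable {R : Type*} [Ring R] {M : Type*} [AddCommGroup M] [Module R M]

/-- Lemma S: transfer of an essential extension through a direct-sum decomposition. -/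
theorem lemmaS {U V : Submodule R M} (hUV : IsCompl U V) {e : Module.End R M}
    (he : e * e = e) {A : Submodule R M} (hA : A ≤ U)
    (hess : EssentialIn (A ⊔ V) (LinearMap.range e)) :
    EssentialIn A (LinearMap.range e ⊓ U) ∧
      IsCompl (LinearMap.range e ⊓ U) (V ⊔ LinearMap.ker e) := by
  have hVE : V ≤ LinearMap.range e := le_trans le_sup_right hess.1
  have hAE : A ≤ LinearMap.range e := le_trans le_sup_left hess.1
  have hUVbot : U ⊓ V = ⊥ := disjoint_iff.mp hUV.disjoint
  have hEdec : LinearMap.range e = V ⊔ LinearMap.range e ⊓ U := by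
    have h1 : (V ⊔ U) ⊓ LinearMap.range e = V ⊔ U ⊓ LinearMap.range e :=
      sup_inf_assoc_of_le U hVE
    have h2 : V ⊔ U = ⊤ := by rw [sup_comm]; exact hUV.codisjoint.eq_top
    rw [h2, top_inf_eq, inf_comm U (LinearMap.range e)] at h1
    exact h1
  constructor
  · refine ⟨le_inf hAE hA, fun K hK hKA => ?_⟩
    refine hess.2 K (hK.trans inf_le_left) ?_
    rw [Submodule.eq_bot_iff]
    rintro x ⟨hxAV, hxK⟩
    obtain ⟨a, ha, v, hv, hav⟩ := Submodule.mem_sup.mp hxAV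
    have hxU : x ∈ U := (hK hxK).2
    have hvU : v ∈ U ⊓ V := by
      refine ⟨?_, hv⟩
      rw [show v = x - a by rw [← hav]; abel]
      exact Submodule.sub_mem _ hxU (hA ha)
    rw [hUVbot] at hvU
    have hxa : x = a := by rw [← hav, show v = 0 from hvU, add_zero]
    have hfin : x ∈ A ⊓ K := ⟨hxa ▸ ha, hxK⟩
    rw [hKA] at hfin
    exact hfin
  · constructor
    · rw [disjoint_iff, Submodule.eq_bot_iff]
      rintro x ⟨⟨hxE, hxU⟩, hxVK⟩
      obtain ⟨v, hv, w, hw, hvw⟩ := Submodule.mem_sup.mp hxVK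
      have hwEk : w ∈ LinearMap.range e ⊓ LinearMap.ker e := by
        refine ⟨?_, hw⟩
        rw [show w = x - v by rw [← hvw]; abel]
        exact Submodule.sub_mem _ hxE (hVE hv)
      rw [disjoint_iff.mp (idem_isCompl he).disjoint] at hwEk
      have hxv : x = v := by rw [← hvw, show w = 0 from hwEk, add_zero]
      have hfin : x ∈ U ⊓ V := ⟨hxU, hxv ▸ hv⟩
      rw [hUVbot] at hfin
      exact hfin
    · rw [codisjoint_iff, eq_top_iff]
      have h3 : LinearMap.range e ⊓ U ⊔ (V ⊔ LinearMap.ker e)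
          = (V ⊔ LinearMap.range e ⊓ U) ⊔ LinearMap.ker e := by
        rw [← sup_assoc, sup_comm (LinearMap.range e ⊓ U) V]
      rw [h3, ← hEdec]
      exact (codisjoint_iff.mp (idem_isCompl he).codisjoint).ge

theorem imp25 {n : ℕ} (h2 : IsCSRickart R (Fin n → R)) :
    IsRelCSRickart R (Fin n → R) R := by
  intro φ
  rcases Nat.eq_zero_or_pos n with rfl | hn
  · refine ⟨1, IsIdempotentElem.one, ?_⟩
    have hk : LinearMap.ker φ = ⊤ := by
      rw [eq_top_iff]; intro x _
      rw [LinearMap.mem_ker, Subsingleton.elim x 0, map_zero]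
    have hr : LinearMap.range (1 : Module.End R (Fin 0 → R)) = ⊤ :=
      LinearMap.range_eq_top.mpr fun x => ⟨x, rfl⟩
    rw [hk, hr]
    exact ess_top_top
  · set ι : R →ₗ[R] (Fin n → R) := LinearMap.single R (fun _ => R) ⟨0, hn⟩ with hι
    have hιinj : Function.Injective ι := fun a b hab => by
      have := congrFun hab ⟨0, hn⟩
      simpa [hι] using this
    obtain ⟨e, he, hess⟩ := h2 (ι ∘ₗ φ)
    refine ⟨e, he, ?_⟩
    have hk : LinearMap.ker (ι ∘ₗ φ) = LinearMap.ker φ := by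
      ext x
      rw [LinearMap.mem_ker, LinearMap.mem_ker]
      constructor
      · intro hh
        apply hιinj
        rw [show (ι ∘ₗ φ) x = ι (φ x) from rfl] at hh
        rw [hh, map_zero]
      · intro hh
        show ι (φ x) = 0
        rw [hh, map_zero]
    rwa [hk] at hess

theorem imp52 {n : ℕ} (h5 : IsRelCSRickart R (Fin n → R) R) :
    IsCSRickart R (Fin n → R) := by
  have key : ∀ k : ℕ, ∀ φ : (Fin n → R) →ₗ[R] (Fin k → R),
      ∃ e : Module.End R (Fin n → R), IsIdempotentElem e ∧
        EssentialIn (LinearMap.ker φ) (LinearMap.range e) := by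
    intro k
    induction k with
    | zero =>
      intro φ
      refine ⟨1, IsIdempotentElem.one, ?_⟩
      have hk : LinearMap.ker φ = ⊤ := by
        rw [eq_top_iff]; intro x _
        rw [LinearMap.mem_ker]
        exact Subsingleton.elim _ _
      have hr : LinearMap.range (1 : Module.End R (Fin n → R)) = ⊤ :=
        LinearMap.range_eq_top.mpr fun x => ⟨x, rfl⟩
      rw [hk, hr]
      exact ess_top_top
    | succ k ih =>
      intro φ
      set φ1 : (Fin n → R) →ₗ[R] (Fin k → R) := (LinearMap.funLeft R R Fin.castSucc).comp φ
        with hφ1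
      set φ2 : (Fin n → R) →ₗ[R] R :=
        (LinearMap.proj (R := R) (φ := fun _ : Fin (k+1) => R) (Fin.last k)).comp φ with hφ2
      obtain ⟨e1, he1, hess1⟩ := ih φ1
      obtain ⟨f, hf, hess2⟩ := h5 (φ2 ∘ₗ (e1 : (Fin n → R) →ₗ[R] (Fin n → R)))
      have hker : LinearMap.ker (φ2 ∘ₗ (e1 : (Fin n → R) →ₗ[R] (Fin n → R)))
          = (LinearMap.ker φ2 ⊓ LinearMap.range e1) ⊔ LinearMap.ker e1 := by
        apply le_antisymm
        · intro x hx
          have hx' : φ2 (e1 x) = 0 := hx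
          refine Submodule.mem_sup.mpr ⟨e1 x, ⟨hx', ⟨x, rfl⟩⟩, x - e1 x, ?_, by abel⟩
          show e1 (x - e1 x) = 0
          rw [map_sub, idem_fix he1 ⟨x, rfl⟩, sub_self]
        · refine sup_le ?_ ?_
          · rintro x ⟨hx2, hxr⟩
            show φ2 (e1 x) = 0
            rw [idem_fix he1 hxr]
            exact hx2
          · intro x hx
            show φ2 (e1 x) = 0
            rw [show e1 x = 0 from hx, map_zero]
      have hess2' : EssentialIn ((LinearMap.ker φ2 ⊓ LinearMap.range e1) ⊔ LinearMap.ker e1)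
          (LinearMap.range f) := by rwa [hker] at hess2
      obtain ⟨hessA, hcompl⟩ := lemmaS (idem_isCompl he1) hf inf_le_right hess2'
      obtain ⟨g, hg, hgr⟩ := exists_idem_range hcompl
      refine ⟨g, hg, ?_⟩
      rw [hgr]
      have hkerφ : LinearMap.ker φ = LinearMap.ker φ1 ⊓ LinearMap.ker φ2 := by
        ext x
        simp only [LinearMap.mem_ker, Submodule.mem_inf]
        constructor
        · intro hx
          constructor
          · show (LinearMap.funLeft R R Fin.castSucc) (φ x) = 0
            rw [hx, map_zero]
          · show (LinearMap.proj (R := R) (φ := fun _ : Fin (k+1) => R) (Fin.last k)) (φ x) = 0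
            rw [hx, map_zero]
        · rintro ⟨hx1, hx2⟩
          have h1 : ∀ i : Fin k, φ x i.castSucc = 0 := fun i => congrFun hx1 i
          have h2 : φ x (Fin.last k) = 0 := hx2
          show φ x = 0
          funext i
          refine Fin.lastCases ?_ ?_ i
          · exact h2
          · exact h1
      rw [hkerφ]
      have hk1 : LinearMap.ker φ1 ≤ LinearMap.range e1 := hess1.1
      have heq2 : LinearMap.ker φ1 ⊓ LinearMap.ker φ2
          = LinearMap.ker φ1 ⊓ (LinearMap.ker φ2 ⊓ LinearMap.range e1) := by
        rw [inf_comm (LinearMap.ker φ2) (LinearMap.range e1), ← inf_assoc,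
          inf_eq_left.mpr hk1]
      rw [heq2]
      exact (hess1.inf inf_le_right).trans hessA
  intro φ
  exact key n φ

end Imps1

section Imps2

open Submodule LinearMap

universe v

theorem imp21 {R : Type v} [Ring R] {n : ℕ} (h2 : IsCSRickart R (Fin n → R))
    (P : Type*) [AddCommGroup P] [Module R P]
    (hproj : Module.Projective R P) (hgen : NGen n (⊤ : Submodule R P)) :
    IsCSRickart R P := by
  intro φ
  obtain ⟨f, hf⟩ := hgen
  set π : (Fin n → R) →ₗ[R] P := combo f with hπdef
  have hπsurj : Function.Surjective π := by
    rw [← LinearMap.range_eq_top, combo_range, hf]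
  obtain ⟨σ, hσ⟩ := Module.projective_lifting_property π LinearMap.id hπsurj
  have hπσ : ∀ p, π (σ p) = p := fun p => DFunLike.congr_fun hσ p
  have hσinj : Function.Injective σ := fun a b hab => by
    rw [← hπσ a, ← hπσ b, hab]
  obtain ⟨e, he, hess⟩ := h2 (σ ∘ₗ φ ∘ₗ π)
  have hUV : IsCompl (LinearMap.range σ) (LinearMap.ker π) := by
    constructor
    · rw [disjoint_iff, Submodule.eq_bot_iff]
      rintro x ⟨⟨p, rfl⟩, hk⟩
      have h0 : π (σ p) = 0 := hk
      rw [hπσ] at h0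
      rw [h0, map_zero]
    · rw [codisjoint_iff, eq_top_iff]
      intro x _
      refine Submodule.mem_sup.mpr ⟨σ (π x), ⟨π x, rfl⟩, x - σ (π x), ?_, by abel⟩
      show π (x - σ (π x)) = 0
      rw [map_sub, hπσ, sub_self]
  have hAU : (LinearMap.ker φ).map σ ≤ LinearMap.range σ := by
    rintro x ⟨k, _, rfl⟩
    exact ⟨k, rfl⟩
  have hkerψ : LinearMap.ker (σ ∘ₗ φ ∘ₗ π)
      = (LinearMap.ker φ).map σ ⊔ LinearMap.ker π := by
    apply le_antisymm
    · intro x hx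
      have hx' : σ (φ (π x)) = 0 := hx
      have hφπ : φ (π x) = 0 := by
        apply hσinj
        rw [hx', map_zero]
      refine Submodule.mem_sup.mpr ⟨σ (π x), ⟨π x, hφπ, rfl⟩, x - σ (π x), ?_, by abel⟩
      show π (x - σ (π x)) = 0
      rw [map_sub, hπσ, sub_self]
    · refine sup_le ?_ ?_
      · rintro x ⟨k, hk, rfl⟩
        show σ (φ (π (σ k))) = 0
        rw [hπσ, show φ k = 0 from hk, map_zero]
      · intro x hx
        show σ (φ (π x)) = 0
        rw [show π x = 0 from hx, map_zero, map_zero]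
  have hess' : EssentialIn ((LinearMap.ker φ).map σ ⊔ LinearMap.ker π)
      (LinearMap.range e) := by rwa [hkerψ] at hess
  obtain ⟨hessA, hcompl⟩ := lemmaS hUV he hAU hess'
  set D := LinearMap.range e ⊓ LinearMap.range σ with hDdef
  set q := D.linearProjOfIsCompl _ hcompl with hqdef
  have hfixD : ∀ d : D, σ (π (d : Fin n → R)) = (d : Fin n → R) := by
    rintro ⟨d, hd⟩
    obtain ⟨p, rfl⟩ := hd.2
    show σ (π (σ p)) = σ p
    rw [hπσ]
  set η : Module.End R P := π ∘ₗ D.subtype ∘ₗ q ∘ₗ σ with hηdef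
  have hηapply : ∀ p, η p = π (q (σ p) : Fin n → R) := fun p => rfl
  refine ⟨η, ?_, ?_⟩
  · show η * η = η
    apply LinearMap.ext
    intro p
    have hq2 : q ((q (σ p) : Fin n → R)) = q (σ p) :=
      Submodule.linearProjOfIsCompl_apply_left hcompl (q (σ p))
    show π ↑(q (σ (π ↑(q (σ p))))) = π ↑(q (σ p))
    rw [hfixD (q (σ p)), hq2]
  · constructor
    · -- ker φ ≤ range η
      intro k hk
      have hσk : σ k ∈ D := hessA.1 ⟨k, hk, rfl⟩
      refine ⟨k, ?_⟩
      have hq1 : q (σ k) = ⟨σ k, hσk⟩ :=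
        Submodule.linearProjOfIsCompl_apply_left hcompl ⟨σ k, hσk⟩
      show π ↑(q (σ k)) = k
      rw [hq1]
      exact hπσ k
    · intro K hK hKA
      have hmap : K.map σ ≤ D := by
        rintro x ⟨k, hk, rfl⟩
        obtain ⟨p, rfl⟩ := hK hk
        show σ (π ↑(q (σ p))) ∈ D
        rw [hfixD (q (σ p))]
        exact (q (σ p)).2
      have hdisj : (LinearMap.ker φ).map σ ⊓ K.map σ = ⊥ := by
        rw [Submodule.eq_bot_iff]
        rintro x ⟨⟨k1, hk1, rfl⟩, hx2⟩
        obtain ⟨k2, hk2, hk2e⟩ := hx2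
        have hkk : k2 = k1 := hσinj hk2e
        have : k1 ∈ LinearMap.ker φ ⊓ K := ⟨hk1, hkk ▸ hk2⟩
        rw [hKA] at this
        rw [show k1 = 0 from this, map_zero]
      have hbot := hessA.2 (K.map σ) hmap hdisj
      rw [Submodule.eq_bot_iff]
      intro k hk
      have : σ k ∈ K.map σ := ⟨k, hk, rfl⟩
      rw [hbot] at this
      exact hσinj (by rw [show σ k = 0 from this, map_zero])

end Imps2

section Imps3

open Submodule LinearMap

variable {R : Type*} [Ring R]

theorem imp54 {n : ℕ} (h5 : IsRelCSRickart R (Fin n → R) R) :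
    ∀ I : Submodule R R, NGen n I →
      ∃ P S : Submodule R R, Module.Projective R P ∧ IsSingularModule R S ∧
        P ⊓ S = ⊥ ∧ P ⊔ S = I := by
  intro I hgen
  obtain ⟨f, hf⟩ := hgen
  set φ : (Fin n → R) →ₗ[R] R := combo f with hφdef
  have hrange : LinearMap.range φ = I := by rw [combo_range, hf]
  obtain ⟨e, he, hess⟩ := h5 φ
  refine ⟨(LinearMap.ker e).map φ, (LinearMap.range e).map φ, ?_, ?_, ?_, ?_⟩
  · -- projective
    have hinj : Function.Injective (φ.domRestrict (LinearMap.ker e)) := by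
      rw [← LinearMap.ker_eq_bot, Submodule.eq_bot_iff]
      rintro ⟨x, hx⟩ hker
      have hxφ : φ x = 0 := hker
      have hmem : x ∈ LinearMap.range e ⊓ LinearMap.ker e := ⟨hess.1 hxφ, hx⟩
      rw [disjoint_iff.mp (idem_isCompl he).disjoint] at hmem
      exact Subtype.ext hmem
    haveI := projective_ker_idem (M := Fin n → R) (R := R) he
    have heq : LinearMap.range (φ.domRestrict (LinearMap.ker e)) = (LinearMap.ker e).map φ :=
      LinearMap.range_domRestrict _ _
    rw [← heq]
    exact Module.Projective.of_equiv (LinearEquiv.ofInjective _ hinj)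
  · -- singular
    rintro ⟨m, hm⟩
    obtain ⟨u, hu, rfl⟩ := hm
    have hker_eq : LinearMap.ker (LinearMap.toSpanSingleton R ((LinearMap.range e).map φ)
          ⟨φ u, ⟨u, hu, rfl⟩⟩)
        = (LinearMap.ker φ).comap (LinearMap.toSpanSingleton R (Fin n → R) u) := by
      ext r
      rw [LinearMap.mem_ker, Submodule.mem_comap, LinearMap.mem_ker]
      constructor
      · intro hr
        have hr' : r • φ u = 0 := congrArg Subtype.val hr
        rw [LinearMap.toSpanSingleton_apply, map_smul]
        exact hr'
      · intro hr
        apply Subtype.ext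
        show r • φ u = 0
        rw [← map_smul]
        rw [LinearMap.toSpanSingleton_apply] at hr
        exact hr
    rw [hker_eq]
    exact ess_comap_toSpan hess hu
  · -- trivial intersection
    rw [Submodule.eq_bot_iff]
    rintro x ⟨⟨u, hu, rfl⟩, w, hw, hwφ⟩
    have hsub : u - w ∈ LinearMap.ker φ := by
      rw [LinearMap.mem_ker, map_sub, hwφ, sub_self]
    have huE : u ∈ LinearMap.range e := by
      have h1 : u = (u - w) + w := by abel
      rw [h1]
      exact Submodule.add_mem _ (hess.1 hsub) hw
    have : u ∈ LinearMap.range e ⊓ LinearMap.ker e := ⟨huE, hu⟩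
    rw [disjoint_iff.mp (idem_isCompl he).disjoint] at this
    rw [show u = 0 from this, map_zero]
  · -- sup
    rw [← Submodule.map_sup]
    have htop : LinearMap.ker e ⊔ LinearMap.range e = ⊤ := by
      rw [sup_comm]
      exact codisjoint_iff.mp (idem_isCompl he).codisjoint
    rw [htop, Submodule.map_top, hrange]

theorem imp45 {n : ℕ}
    (h4 : ∀ I : Submodule R R, NGen n I →
      ∃ P S : Submodule R R, Module.Projective R P ∧ IsSingularModule R S ∧
        P ⊓ S = ⊥ ∧ P ⊔ S = I) :
    IsRelCSRickart R (Fin n → R) R := by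
  intro φ
  obtain ⟨P, S, hPproj, hSsing, hPS, hsup⟩ := h4 (LinearMap.range φ) (ngen_range φ)
  have hPle : P ≤ LinearMap.range φ := hsup ▸ le_sup_left
  have hcompl := isCompl_comap_subtype hPS hsup
  set ρ : ↥(LinearMap.range φ) →ₗ[R] ↥P :=
    (Submodule.comapSubtypeEquivOfLe hPle).toLinearMap ∘ₗ
      Submodule.linearProjOfIsCompl _ _ hcompl with hρdef
  set g : (Fin n → R) →ₗ[R] ↥P := ρ ∘ₗ φ.rangeRestrict with hgdef
  have hgsurj : Function.Surjective g := by
    rintro ⟨p, hp⟩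
    obtain ⟨x, hx⟩ := hPle hp
    refine ⟨x, ?_⟩
    have hmem : φ.rangeRestrict x = ⟨p, hPle hp⟩ := Subtype.ext hx
    show ρ (φ.rangeRestrict x) = ⟨p, hp⟩
    rw [hmem]
    have h1 : Submodule.linearProjOfIsCompl _ _ hcompl ⟨p, hPle hp⟩
        = ⟨⟨p, hPle hp⟩, hp⟩ :=
      Submodule.linearProjOfIsCompl_apply_left hcompl ⟨⟨p, hPle hp⟩, hp⟩
    show (Submodule.comapSubtypeEquivOfLe hPle)
      (Submodule.linearProjOfIsCompl _ _ hcompl ⟨p, hPle hp⟩) = ⟨p, hp⟩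
    rw [h1]
    exact Subtype.ext rfl
  haveI := hPproj
  obtain ⟨σ0, hσ0⟩ := Module.projective_lifting_property g LinearMap.id hgsurj
  have hgσ : ∀ p, g (σ0 p) = p := fun p => DFunLike.congr_fun hσ0 p
  set τ : Module.End R (Fin n → R) := σ0 ∘ₗ g with hτdef
  have hττ : τ * τ = τ := by
    apply LinearMap.ext
    intro x
    show σ0 (g (σ0 (g x))) = σ0 (g x)
    rw [hgσ]
  obtain ⟨hidem, hrange2, hdisj2, hsup2⟩ :=
    split_idem (ε := (1 : Module.End R (Fin n → R))) (τ := τ) (one_mul 1) hττ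
      (one_mul τ) (mul_one τ)
  have hker_g : ∀ x, g x = 0 ↔ φ x ∈ S := by
    intro x
    show (Submodule.comapSubtypeEquivOfLe hPle)
      (Submodule.projectionOnto _ _ hcompl (φ.rangeRestrict x)) = 0 ↔ φ x ∈ S
    rw [LinearEquiv.map_eq_zero_iff, Submodule.projectionOnto_apply_eq_zero_iff]
    exact Iff.rfl
  refine ⟨1 - τ, hidem, ?_⟩
  have hkerφ_le : LinearMap.ker φ ≤ LinearMap.range (1 - τ) := by
    intro x hx
    refine ⟨x, ?_⟩
    show x - σ0 (g x) = x
    have hgx : g x = 0 := (hker_g x).mpr (by rw [show φ x = 0 from hx]; exact S.zero_mem)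
    rw [hgx, map_zero, sub_zero]
  refine ess_in_idem_range hidem hkerφ_le ?_
  intro k hk
  have hgk : g k = 0 := by
    obtain ⟨y, rfl⟩ := hk
    show g (y - σ0 (g y)) = 0
    rw [map_sub, show g (σ0 (g y)) = g y from hgσ (g y), sub_self]
  have hφkS : φ k ∈ S := (hker_g k).mp hgk
  have hSess := hSsing ⟨φ k, hφkS⟩
  have heq : (LinearMap.ker φ).comap (LinearMap.toSpanSingleton R (Fin n → R) k)
      = LinearMap.ker (LinearMap.toSpanSingleton R ↥S ⟨φ k, hφkS⟩) := by
    ext r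
    rw [Submodule.mem_comap, LinearMap.mem_ker, LinearMap.mem_ker]
    constructor
    · intro hr
      apply Subtype.ext
      show r • φ k = 0
      rw [← map_smul]
      rw [LinearMap.toSpanSingleton_apply] at hr
      exact hr
    · intro hr
      rw [LinearMap.toSpanSingleton_apply, map_smul]
      exact congrArg Subtype.val hr
  rw [heq]
  exact hSess

end Imps3

section MatrixCorr

open Submodule LinearMap

variable {R : Type*} [Ring R] {n : ℕ}

theorem theta_mul (A B : Matrix (Fin n) (Fin n) R) :
    (A * B).vecMulLinear = B.vecMulLinear ∘ₗ A.vecMulLinear := by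
  apply LinearMap.ext
  intro v
  show Matrix.vecMul v (A * B) = Matrix.vecMul (Matrix.vecMul v A) B
  rw [Matrix.vecMul_vecMul]

/-- The matrix of an endomorphism of the free module of rank `n`. -/
def matOf (φ : Module.End R (Fin n → R)) : Matrix (Fin n) (Fin n) R :=
  Matrix.of fun i j => φ (Pi.single i 1) j

theorem theta_matOf (φ : Module.End R (Fin n → R)) : (matOf φ).vecMulLinear = φ := by
  apply LinearMap.ext
  intro v
  have hv : v = ∑ i, (v i) • (Pi.single i (1:R) : Fin n → R) := by
    have h1 : ∀ i, (v i) • (Pi.single i (1:R) : Fin n → R) = Pi.single i (v i) := by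
      intro i
      funext j
      rcases eq_or_ne j i with rfl | hji
      · simp
      · simp [Pi.single_eq_of_ne hji]
    calc v = ∑ i, Pi.single i (v i) := (Finset.univ_sum_single v).symm
    _ = ∑ i, (v i) • (Pi.single i (1:R) : Fin n → R) :=
      Finset.sum_congr rfl fun i _ => (h1 i).symm
  funext j
  show Matrix.vecMul v (matOf φ) j = φ v j
  rw [Matrix.vecMul, dotProduct]
  conv_rhs => rw [hv]
  rw [map_sum, Finset.sum_apply]
  refine Finset.sum_congr rfl fun i _ => ?_
  rw [map_smul, Pi.smul_apply, smul_eq_mul]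
  rfl

theorem matOf_theta (A : Matrix (Fin n) (Fin n) R) : matOf A.vecMulLinear = A := by
  funext i j
  show Matrix.vecMul (Pi.single i 1) A j = A i j
  rw [Matrix.vecMul, dotProduct]
  rw [Finset.sum_eq_single i]
  · simp
  · intro k _ hk
    rw [Pi.single_eq_of_ne hk, zero_mul]
  · simp

theorem vecMulLinear_inj {A B : Matrix (Fin n) (Fin n) R}
    (h : A.vecMulLinear = B.vecMulLinear) : A = B := by
  rw [← matOf_theta A, ← matOf_theta B, h]

theorem row_mul (B X : Matrix (Fin n) (Fin n) R) (i : Fin n) :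
    (B * X) i = ∑ j, B i j • X j := by
  funext k
  rw [Matrix.mul_apply, Finset.sum_apply]
  refine Finset.sum_congr rfl fun j _ => ?_
  rw [Pi.smul_apply, smul_eq_mul]

/-- The left ideal of matrices all of whose rows lie in a given submodule of `Rⁿ`. -/
def Rows (N : Submodule R (Fin n → R)) :
    Submodule (Matrix (Fin n) (Fin n) R) (Matrix (Fin n) (Fin n) R) where
  carrier := {X | ∀ i, X i ∈ N}
  add_mem' := fun hX hY i => N.add_mem (hX i) (hY i)
  zero_mem' := fun _ => N.zero_mem
  smul_mem' := by
    intro B X hX i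
    have h1 : (B • X) i = ∑ j, B i j • X j := by
      rw [smul_eq_mul, row_mul]
    rw [h1]
    exact Submodule.sum_mem _ fun j _ => N.smul_mem _ (hX j)

theorem mem_rows {N : Submodule R (Fin n → R)} {X : Matrix (Fin n) (Fin n) R} :
    X ∈ Rows N ↔ ∀ i, X i ∈ N := Iff.rfl

theorem rows_mono {N N' : Submodule R (Fin n → R)} (h : N ≤ N') : Rows N ≤ Rows N' :=
  fun _ hX i => h (hX i)

theorem annElem_eq_rows (A : Matrix (Fin n) (Fin n) R) :
    annElem (Matrix (Fin n) (Fin n) R) A = Rows (LinearMap.ker A.vecMulLinear) := by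
  ext X
  rw [annElem, LinearMap.mem_ker, mem_rows]
  have h1 : LinearMap.toSpanSingleton (Matrix (Fin n) (Fin n) R)
      (Matrix (Fin n) (Fin n) R) A X = X * A := by
    rw [LinearMap.toSpanSingleton_apply, smul_eq_mul]
  rw [h1]
  constructor
  · intro h i
    rw [LinearMap.mem_ker, Matrix.vecMulLinear_apply]
    funext k
    have := congrFun (congrFun h i) k
    rw [Matrix.mul_apply] at this
    rw [show Matrix.vecMul (X i) A k = ∑ j, X i j * A j k from rfl]
    exact this
  · intro h
    funext i k
    have h2 := h i
    rw [LinearMap.mem_ker, Matrix.vecMulLinear_apply] at h2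
    have := congrFun h2 k
    rw [show Matrix.vecMul (X i) A k = ∑ j, X i j * A j k from rfl] at this
    rw [Matrix.mul_apply]
    exact this

theorem idealGen_eq_rows (E : Matrix (Fin n) (Fin n) R) :
    idealGen (Matrix (Fin n) (Fin n) R) E = Rows (LinearMap.range E.vecMulLinear) := by
  ext X
  rw [idealGen, LinearMap.mem_range, mem_rows]
  constructor
  · rintro ⟨Y, rfl⟩
    intro i
    refine ⟨Y i, ?_⟩
    rw [Matrix.vecMulLinear_apply]
    have h1 : LinearMap.toSpanSingleton (Matrix (Fin n) (Fin n) R)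
        (Matrix (Fin n) (Fin n) R) E Y = Y * E := by
      rw [LinearMap.toSpanSingleton_apply, smul_eq_mul]
    rw [h1]
    funext k
    rw [Matrix.mul_apply]
    rfl
  · intro h
    choose v hv using fun i => h i
    refine ⟨Matrix.of v, ?_⟩
    rw [LinearMap.toSpanSingleton_apply, smul_eq_mul]
    funext i k
    rw [Matrix.mul_apply]
    have := hv i
    rw [Matrix.vecMulLinear_apply] at this
    have h2 := congrFun this k
    rw [show Matrix.vecMul (v i) E k = ∑ j, v i j * E j k from rfl] at h2
    exact h2

/-- The matrix with one (possibly) nonzero row. -/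
def placed (i₀ : Fin n) (v : Fin n → R) : Matrix (Fin n) (Fin n) R :=
  Matrix.of fun i k => if i = i₀ then v k else 0

theorem placed_row_self (i₀ : Fin n) (v : Fin n → R) : placed i₀ v i₀ = v := by
  funext k
  show (if i₀ = i₀ then v k else 0) = v k
  rw [if_pos rfl]

theorem placed_row_other (i₀ : Fin n) (v : Fin n → R) {i : Fin n} (h : i ≠ i₀) :
    placed i₀ v i = 0 := by
  funext k
  show (if i = i₀ then v k else 0) = 0
  rw [if_neg h]

theorem placed_mem_rows {i₀ : Fin n} {v : Fin n → R} {N : Submodule R (Fin n → R)}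
    (hv : v ∈ N) : placed i₀ v ∈ Rows N := by
  intro i
  rcases eq_or_ne i i₀ with rfl | hi
  · rw [placed_row_self]; exact hv
  · rw [placed_row_other _ _ hi]; exact N.zero_mem

theorem placed_extract {i₀ : Fin n} {K : Submodule (Matrix (Fin n) (Fin n) R)
    (Matrix (Fin n) (Fin n) R)} {Y : Matrix (Fin n) (Fin n) R} (hY : Y ∈ K) (i : Fin n) :
    placed i₀ (Y i) ∈ K := by
  have h1 : placed i₀ (Y i) = placed i₀ (Pi.single i (1:R)) • Y := by
    rw [smul_eq_mul]
    funext l k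
    rw [Matrix.mul_apply]
    show (if l = i₀ then Y i k else 0)
      = ∑ j, (if l = i₀ then (Pi.single i (1:R) : Fin n → R) j else 0) * Y j k
    rcases eq_or_ne l i₀ with rfl | hl
    · rw [Finset.sum_eq_single i]
      · simp
      · intro j _ hj
        simp [Pi.single_eq_of_ne hj]
      · simp
    · simp only [if_neg hl]
      exact (Finset.sum_eq_zero fun j _ => by rw [zero_mul]).symm
  rw [h1]
  exact K.smul_mem _ hY

/-- Pulling a left ideal of the matrix ring back to a submodule of `Rⁿ` via one row. -/
def placedSub (i₀ : Fin n) (K : Submodule (Matrix (Fin n) (Fin n) R)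
    (Matrix (Fin n) (Fin n) R)) : Submodule R (Fin n → R) where
  carrier := {v | placed i₀ v ∈ K}
  add_mem' := by
    intro v w hv hw
    have h1 : placed i₀ (v + w) = placed i₀ v + placed i₀ w := by
      funext i k
      show (if i = i₀ then (v + w) k else 0) = (if i = i₀ then v k else 0) + (if i = i₀ then w k else 0)
      rcases eq_or_ne i i₀ with rfl | hi
      · rw [if_pos rfl, if_pos rfl, if_pos rfl]; rfl
      · rw [if_neg hi, if_neg hi, if_neg hi, add_zero]
    show placed i₀ (v + w) ∈ K
    rw [h1]
    exact K.add_mem hv hw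
  zero_mem' := by
    show placed i₀ 0 ∈ K
    have h1 : placed i₀ (0 : Fin n → R) = 0 := by
      funext i k
      show (if i = i₀ then (0:R) else 0) = 0
      exact ite_self 0
    rw [h1]
    exact K.zero_mem
  smul_mem' := by
    intro r v hv
    have h1 : placed i₀ (r • v) = (Matrix.diagonal (fun _ => r) : Matrix (Fin n) (Fin n) R) • placed i₀ v := by
      rw [smul_eq_mul]
      funext i k
      rw [Matrix.mul_apply]
      show (if i = i₀ then r * v k else 0)
        = ∑ j, (if i = j then r else 0) * (if j = i₀ then v k else 0)
      rw [Finset.sum_eq_single i]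
      · rw [if_pos rfl]
        rcases eq_or_ne i i₀ with rfl | hi
        · rw [if_pos rfl, if_pos rfl]
        · rw [if_neg hi, if_neg hi, mul_zero]
      · intro j _ hj
        rw [if_neg fun hh => hj hh.symm, zero_mul]
      · simp
    show placed i₀ (r • v) ∈ K
    rw [h1]
    exact K.smul_mem _ hv

theorem rows_ess_of_ess (i₀ : Fin n) {N N' : Submodule R (Fin n → R)}
    (h : EssentialIn N N') : EssentialIn (Rows N) (Rows N') := by
  refine ⟨rows_mono h.1, fun K hK hKA => ?_⟩
  have hV := h.2 (placedSub i₀ K) ?_ ?_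
  · rw [Submodule.eq_bot_iff]
    intro Y hY
    funext i
    have h1 : Y i ∈ placedSub i₀ K := placed_extract hY i
    rw [hV] at h1
    exact h1
  · intro v hv
    have h2 : placed i₀ v ∈ Rows N' := hK hv
    have := h2 i₀
    rwa [placed_row_self] at this
  · rw [Submodule.eq_bot_iff]
    rintro v ⟨hvN, hvK⟩
    have h3 : placed i₀ v ∈ Rows N ⊓ K := ⟨placed_mem_rows hvN, hvK⟩
    rw [hKA] at h3
    have h4 : placed i₀ v = 0 := h3
    have := congrFun h4 i₀
    rwa [placed_row_self] at this

theorem ess_of_rows_ess (i₀ : Fin n) {N N' : Submodule R (Fin n → R)}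
    (h : EssentialIn (Rows N) (Rows N')) : EssentialIn N N' := by
  constructor
  · intro v hv
    have h1 : placed i₀ v ∈ Rows N' := h.1 (placed_mem_rows hv)
    have := h1 i₀
    rwa [placed_row_self] at this
  · intro K hK hKA
    have hrows : Rows K = ⊥ := by
      refine h.2 (Rows K) (rows_mono hK) ?_
      rw [Submodule.eq_bot_iff]
      rintro X ⟨hX1, hX2⟩
      funext i
      have : X i ∈ N ⊓ K := ⟨hX1 i, hX2 i⟩
      rw [hKA] at this
      exact this
    rw [Submodule.eq_bot_iff]
    intro v hv
    have h1 : placed i₀ v ∈ Rows K := placed_mem_rows hv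
    rw [hrows] at h1
    have := congrFun (show placed i₀ v = 0 from h1) i₀
    rwa [placed_row_self] at this

end MatrixCorr

section Imps4

open Submodule LinearMap

variable {R : Type*} [Ring R] {M : Type*} [AddCommGroup M] [Module R M]

theorem singular_bot : IsSingularModule R (⊥ : Submodule R M) := by
  intro m
  have hm : m = 0 := Subsingleton.elim m 0
  have h1 : LinearMap.ker (LinearMap.toSpanSingleton R (⊥ : Submodule R M) m) = ⊤ := by
    rw [eq_top_iff]
    intro r _
    rw [LinearMap.mem_ker, LinearMap.toSpanSingleton_apply, hm, smul_zero]
  rw [h1]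
  exact ess_top_top

theorem ess_iInf {n : ℕ} {A : Fin n → Submodule R M}
    (h : ∀ i, EssentialIn (A i) ⊤) : EssentialIn (⨅ i, A i) (⊤ : Submodule R M) := by
  classical
  have key : ∀ s : Finset (Fin n), EssentialIn (⨅ i ∈ s, A i) ⊤ := by
    intro s
    induction s using Finset.induction_on with
    | empty =>
      have e1 : (⨅ i ∈ (∅ : Finset (Fin n)), A i) = ⊤ := by simp
      rw [e1]
      exact ess_top_top
    | @insert j s hj ih =>
      have e2 : (⨅ i ∈ insert j s, A i) = A j ⊓ ⨅ i ∈ s, A i := by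
        rw [Finset.iInf_insert]
      rw [e2]
      exact ess_inf_top (h j) ih
  have hkey := key Finset.univ
  have heq : (⨅ i ∈ Finset.univ, A i) = ⨅ i, A i := by simp
  rwa [heq] at hkey

theorem imp23 {n : ℕ} (h2 : IsCSRickart R (Fin n → R)) :
    IsACSRing (Matrix (Fin n) (Fin n) R) := by
  rcases Nat.eq_zero_or_pos n with rfl | hn
  · haveI : Subsingleton (Matrix (Fin 0) (Fin 0) R) :=
      ⟨fun a b => Matrix.ext fun i => i.elim0⟩
    intro a
    exact ⟨1, IsIdempotentElem.one, essIn_of_subsingleton _ _⟩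
  · intro a
    obtain ⟨e, he, hess⟩ := h2 a.vecMulLinear
    refine ⟨matOf e, ?_, ?_⟩
    · show matOf e * matOf e = matOf e
      apply vecMulLinear_inj
      rw [theta_mul, theta_matOf]
      apply LinearMap.ext
      intro v
      show e (e v) = e v
      exact DFunLike.congr_fun he v
    · rw [annElem_eq_rows, idealGen_eq_rows, theta_matOf]
      exact rows_ess_of_ess ⟨0, hn⟩ hess

theorem imp32 {n : ℕ} (h3 : IsACSRing (Matrix (Fin n) (Fin n) R)) :
    IsCSRickart R (Fin n → R) := by
  rcases Nat.eq_zero_or_pos n with rfl | hn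
  · intro φ
    exact ⟨1, IsIdempotentElem.one, essIn_of_subsingleton _ _⟩
  · intro φ
    obtain ⟨E, hE, hess⟩ := h3 (matOf φ)
    refine ⟨E.vecMulLinear, ?_, ?_⟩
    · show E.vecMulLinear * E.vecMulLinear = E.vecMulLinear
      have h1 := theta_mul E E
      rw [hE] at h1
      apply LinearMap.ext
      intro v
      exact (DFunLike.congr_fun h1 v).symm
    · rw [annElem_eq_rows, idealGen_eq_rows, theta_matOf] at hess
      exact ess_of_rows_ess ⟨0, hn⟩ hess

end Imps4

section Imps5

open Submodule LinearMap

variable {R : Type*} [Ring R]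

theorem imp64 {n : ℕ}
    (h6 : ∀ N : Submodule R (Fin n → R), NGen n N →
      ∃ (P : Fin n → Submodule R (Fin n → R)) (S : Submodule R (Fin n → R)),
        iSupIndep (fun o : Option (Fin n) => o.elim S P) ∧
        ((⨆ i, P i) ⊔ S = N) ∧
        (∀ i, Module.Projective R (P i) ∧
          ∃ J : Submodule R R, Nonempty ((P i) ≃ₗ[R] J)) ∧
        IsSingularModule R S) :
    ∀ I : Submodule R R, NGen n I →
      ∃ P S : Submodule R R, Module.Projective R P ∧ IsSingularModule R S ∧
        P ⊓ S = ⊥ ∧ P ⊔ S = I := by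
  intro I hI
  rcases Nat.eq_zero_or_pos n with rfl | hn
  · obtain ⟨f, hf⟩ := hI
    have hIbot : I = ⊥ := by
      rw [← hf, Set.range_eq_empty f, Submodule.span_empty]
    refine ⟨⊥, ⊥, projective_bot, singular_bot, ?_, ?_⟩
    · simp
    · rw [hIbot]; simp
  · set i0 : Fin n := ⟨0, hn⟩ with hi0
    set ι : R →ₗ[R] (Fin n → R) := LinearMap.single R (fun _ => R) i0 with hιdef
    set π : (Fin n → R) →ₗ[R] R :=
      LinearMap.proj (R := R) (φ := fun _ : Fin n => R) i0 with hπdef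
    have hπι : ∀ r, π (ι r) = r := by
      intro r
      show (Pi.single i0 r : Fin n → R) i0 = r
      rw [Pi.single_eq_same]
    obtain ⟨P, S, hindep, hsup, hPproj, hSsing⟩ := h6 (I.map ι) (hI.map ι)
    have hNle : (⨆ i, P i) ⊔ S ≤ LinearMap.range ι := by
      rw [hsup]
      rintro x ⟨r, _, rfl⟩
      exact ⟨r, rfl⟩
    have hPle : ∀ i, P i ≤ LinearMap.range ι := fun i =>
      le_trans (le_trans (le_iSup P i) le_sup_left) hNle
    have hSle : S ≤ LinearMap.range ι := le_trans le_sup_right hNle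
    have hinj : ∀ x ∈ LinearMap.range ι, π x = 0 → x = 0 := by
      rintro x ⟨r, rfl⟩ hx
      rw [hπι] at hx
      rw [hx, map_zero]
    have hPind : ∀ (j : Fin n) (s : Finset (Fin n)), j ∉ s → P j ⊓ (⨆ i ∈ s, P i) = ⊥ := by
      intro j s hj
      have h1 : (⨆ i ∈ s, P i)
          ≤ ⨆ o : Option (Fin n), ⨆ _ : o ≠ some j, (Option.elim o S P) := by
        refine iSup_le fun i => iSup_le fun hi => ?_
        have hne : (some i : Option (Fin n)) ≠ some j := fun hh => hj (by
          cases hh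
          exact hi)
        exact le_iSup₂ (f := fun (o : Option (Fin n)) (_ : o ≠ some j) => Option.elim o S P)
          (some i) hne
      have h2 := hindep (some j)
      rw [disjoint_iff] at h2
      rw [← le_bot_iff]
      calc P j ⊓ (⨆ i ∈ s, P i)
          ≤ Option.elim (some j) S P ⊓ ⨆ o : Option (Fin n), ⨆ _ : o ≠ some j, Option.elim o S P :=
            inf_le_inf (le_refl _) h1
      _ = ⊥ := h2
    have hSP : S ⊓ (⨆ i, P i) = ⊥ := by
      have h1 : (⨆ i, P i)
          ≤ ⨆ o : Option (Fin n), ⨆ _ : o ≠ none, (Option.elim o S P) := by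
        refine iSup_le fun i => ?_
        exact le_iSup₂ (f := fun (o : Option (Fin n)) (_ : o ≠ none) => Option.elim o S P)
          (some i) (by simp)
      have h2 := hindep none
      rw [disjoint_iff] at h2
      rw [← le_bot_iff]
      calc S ⊓ (⨆ i, P i)
          ≤ Option.elim none S P ⊓ ⨆ o : Option (Fin n), ⨆ _ : o ≠ none, Option.elim o S P :=
            inf_le_inf (le_refl _) h1
      _ = ⊥ := h2
    have hPsle : (⨆ i, P i) ≤ LinearMap.range ι := le_trans le_sup_left hNle
    have hinjP : Function.Injective (π.domRestrict (⨆ i, P i)) := by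
      rw [← LinearMap.ker_eq_bot, Submodule.eq_bot_iff]
      rintro ⟨x, hx⟩ hk
      have hk' : π x = 0 := hk
      exact Subtype.ext (hinj x (hPsle hx) hk')
    refine ⟨(⨆ i, P i).map π, S.map π, ?_, ?_, ?_, ?_⟩
    · -- projective
      haveI hdom : Module.Projective R ↥(⨆ i, P i) :=
        projective_iSup (fun i => (hPproj i).1) hPind
      have heq : LinearMap.range (π.domRestrict (⨆ i, P i)) = (⨆ i, P i).map π :=
        LinearMap.range_domRestrict _ _
      rw [← heq]
      exact Module.Projective.of_equiv (LinearEquiv.ofInjective _ hinjP)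
    · -- singular
      rintro ⟨m, hm⟩
      obtain ⟨v, hv, rfl⟩ := hm
      have hker_eq : LinearMap.ker (LinearMap.toSpanSingleton R (S.map π) ⟨π v, ⟨v, hv, rfl⟩⟩)
          = LinearMap.ker (LinearMap.toSpanSingleton R S ⟨v, hv⟩) := by
        ext r
        rw [LinearMap.mem_ker, LinearMap.mem_ker]
        constructor
        · intro hr
          apply Subtype.ext
          show r • v = 0
          have h1 : r • π v = 0 := congrArg Subtype.val hr
          have h2 : π (r • v) = 0 := by rw [map_smul]; exact h1
          exact hinj _ (hSle (S.smul_mem r hv)) h2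
        · intro hr
          apply Subtype.ext
          show r • π v = 0
          have h1 : r • v = 0 := congrArg Subtype.val hr
          rw [← map_smul, h1, map_zero]
      rw [hker_eq]
      exact hSsing ⟨v, hv⟩
    · -- trivial intersection
      rw [Submodule.eq_bot_iff]
      rintro x ⟨⟨u, hu, rfl⟩, w, hw, hwπ⟩
      have h0 : π (u - w) = 0 := by rw [map_sub, hwπ, sub_self]
      have huw : u - w = 0 :=
        hinj _ (Submodule.sub_mem _ (hPsle hu) (hSle hw)) h0
      have huS : u ∈ S := by
        rw [show u = w from by rw [← sub_eq_zero]; exact huw]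
        exact hw
      have : u ∈ S ⊓ ⨆ i, P i := ⟨huS, hu⟩
      rw [hSP] at this
      rw [show u = 0 from this, map_zero]
    · -- sup
      have h1 : (⨆ i, P i).map π ⊔ S.map π = ((⨆ i, P i) ⊔ S).map π :=
        (Submodule.map_sup _ _ _).symm
      rw [h1, hsup]
      have h2 : (I.map ι).map π = I.map (π ∘ₗ ι) := (Submodule.map_comp _ _ _).symm
      rw [h2, show π ∘ₗ ι = LinearMap.id from LinearMap.ext hπι, Submodule.map_id]

end Imps5

section Imps6

open Submodule LinearMap

variable {R : Type*} [Ring R]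

theorem imp46 {n : ℕ}
    (h4 : ∀ I : Submodule R R, NGen n I →
      ∃ P S : Submodule R R, Module.Projective R P ∧ IsSingularModule R S ∧
        P ⊓ S = ⊥ ∧ P ⊔ S = I) :
    ∀ N : Submodule R (Fin n → R), NGen n N →
      ∃ (P : Fin n → Submodule R (Fin n → R)) (S : Submodule R (Fin n → R)),
        iSupIndep (fun o : Option (Fin n) => o.elim S P) ∧
        ((⨆ i, P i) ⊔ S = N) ∧
        (∀ i, Module.Projective R (P i) ∧
          ∃ J : Submodule R R, Nonempty ((P i) ≃ₗ[R] J)) ∧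
        IsSingularModule R S := by
  classical
  intro N hN
  obtain ⟨fgen, hfgen⟩ := hN
  set ψ : (Fin n → R) →ₗ[R] (Fin n → R) := combo fgen with hψdef
  have hψrange : LinearMap.range ψ = N := by rw [combo_range, hfgen]
  have AUX : ∀ s : Finset (Fin n), ∀ ε : Module.End R (Fin n → R), ε * ε = ε →
      (∀ y ∈ LinearMap.range (ψ ∘ₗ ε), ∀ i ∉ s,
        EssentialIn (LinearMap.ker (LinearMap.toSpanSingleton R R (y i))) (⊤ : Submodule R R)) →
      ∃ (P : Fin n → Submodule R (Fin n → R)) (S : Submodule R (Fin n → R)),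
        (∀ i ∉ s, P i = ⊥) ∧
        iSupIndep (fun o : Option (Fin n) => o.elim S P) ∧
        ((⨆ i, P i) ⊔ S = LinearMap.range (ψ ∘ₗ ε)) ∧
        (∀ i, Module.Projective R (P i) ∧
          ∃ J : Submodule R R, Nonempty ((P i) ≃ₗ[R] J)) ∧
        IsSingularModule R S := by
    intro s
    induction s using Finset.induction_on with
    | empty =>
      intro ε hε hsing
      refine ⟨fun _ => ⊥, LinearMap.range (ψ ∘ₗ ε), fun _ _ => rfl, ?_, ?_, ?_, ?_⟩
      · intro o
        rcases o with _ | i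
        · refine Disjoint.mono_right ?_ disjoint_bot_right
          refine iSup_le fun o' => iSup_le fun ho' => ?_
          rcases o' with _ | i
          · exact absurd rfl ho'
          · exact le_rfl
        · exact disjoint_bot_left
      · rw [show (⨆ _ : Fin n, (⊥ : Submodule R (Fin n → R))) = ⊥ from by simp, bot_sup_eq]
      · intro i
        exact ⟨projective_bot, ⊥, bot_equiv_bot⟩
      · rintro ⟨m, hm⟩
        have hker : LinearMap.ker (LinearMap.toSpanSingleton R
              (LinearMap.range (ψ ∘ₗ ε)) ⟨m, hm⟩)
            = ⨅ i : Fin n, LinearMap.ker (LinearMap.toSpanSingleton R R (m i)) := by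
          ext r
          rw [LinearMap.mem_ker, Submodule.mem_iInf]
          constructor
          · intro hr i
            rw [LinearMap.mem_ker, LinearMap.toSpanSingleton_apply]
            have h1 : r • m = 0 := congrArg Subtype.val hr
            exact congrFun h1 i
          · intro hr
            apply Subtype.ext
            show r • m = 0
            funext i
            have h2 := hr i
            rw [LinearMap.mem_ker, LinearMap.toSpanSingleton_apply] at h2
            exact h2
        rw [hker]
        exact ess_iInf fun i => hsing m hm i (Finset.notMem_empty i)
    | @insert j s hj ih =>
      intro ε hε hsing
      set πj : (Fin n → R) →ₗ[R] R :=
        LinearMap.proj (R := R) (φ := fun _ : Fin n => R) j with hπj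
      obtain ⟨P', S', hP'proj, hS'sing, hP'S', hP'sup⟩ :=
        h4 (LinearMap.range (πj ∘ₗ ψ ∘ₗ ε)) (ngen_range _)
      have hP'le : P' ≤ LinearMap.range (πj ∘ₗ ψ ∘ₗ ε) := hP'sup ▸ le_sup_left
      have hcompl := isCompl_comap_subtype hP'S' hP'sup
      set g : (Fin n → R) →ₗ[R] ↥P' :=
        ((Submodule.comapSubtypeEquivOfLe hP'le).toLinearMap ∘ₗ
          Submodule.linearProjOfIsCompl _ _ hcompl) ∘ₗ (πj ∘ₗ ψ ∘ₗ ε).rangeRestrict with hgdef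
      have hgapp : ∀ x, g x = (Submodule.comapSubtypeEquivOfLe hP'le)
          (Submodule.linearProjOfIsCompl _ _ hcompl ((πj ∘ₗ ψ ∘ₗ ε).rangeRestrict x)) :=
        fun _ => rfl
      have hgε : ∀ x, g (ε x) = g x := by
        intro x
        have h1 : (πj ∘ₗ ψ ∘ₗ ε).rangeRestrict (ε x) = (πj ∘ₗ ψ ∘ₗ ε).rangeRestrict x := by
          apply Subtype.ext
          show πj (ψ (ε (ε x))) = πj (ψ (ε x))
          rw [show ε (ε x) = ε x from DFunLike.congr_fun hε x]
        rw [hgapp, hgapp, h1]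
      have hgsurj : Function.Surjective g := by
        rintro ⟨p, hp⟩
        obtain ⟨x, hx⟩ := hP'le hp
        refine ⟨x, ?_⟩
        have hmem : (πj ∘ₗ ψ ∘ₗ ε).rangeRestrict x = ⟨p, hP'le hp⟩ := Subtype.ext hx
        rw [hgapp, hmem]
        have h1 : Submodule.linearProjOfIsCompl _ _ hcompl ⟨p, hP'le hp⟩ = ⟨⟨p, hP'le hp⟩, hp⟩ :=
          Submodule.linearProjOfIsCompl_apply_left hcompl ⟨⟨p, hP'le hp⟩, hp⟩
        rw [h1]
        exact Subtype.ext rfl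
      haveI := hP'proj
      obtain ⟨σ0, hσ0⟩ := Module.projective_lifting_property g LinearMap.id hgsurj
      have hgσ0 : ∀ p, g (σ0 p) = p := fun p => DFunLike.congr_fun hσ0 p
      set σ : ↥P' →ₗ[R] (Fin n → R) := ε ∘ₗ σ0 with hσdef
      have hgσ : ∀ p, g (σ p) = p := by
        intro p
        show g (ε (σ0 p)) = p
        rw [hgε, hgσ0]
      set τ : Module.End R (Fin n → R) := σ ∘ₗ g with hτdef
      have hτapp : ∀ x, τ x = σ (g x) := fun _ => rfl
      have hττ : τ * τ = τ := LinearMap.ext fun x => by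
        show σ (g (σ (g x))) = σ (g x)
        rw [hgσ]
      have hετ : ε * τ = τ := LinearMap.ext fun x => by
        show ε (ε (σ0 (g x))) = ε (σ0 (g x))
        exact DFunLike.congr_fun hε _
      have hτε : τ * ε = τ := LinearMap.ext fun x => by
        show σ (g (ε x)) = σ (g x)
        rw [hgε]
      obtain ⟨hidem2, hrange2, hdisj2, hsup2⟩ := split_idem hε hττ hετ hτε
      have hidem2' : (ε - τ) * (ε - τ) = ε - τ := hidem2
      have hσinj : Function.Injective σ := fun a b hab => by rw [← hgσ a, ← hgσ b, hab]
      have hεε2 : ε * (ε - τ) = ε - τ := by rw [mul_sub, hε, hετ]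
      have hgε2 : ∀ x, g ((ε - τ) x) = 0 := by
        intro x
        have h1 : (ε - τ) x ∈ LinearMap.range ε ⊓ LinearMap.ker τ := hrange2 ▸ ⟨x, rfl⟩
        have h2 : τ ((ε - τ) x) = 0 := h1.2
        apply hσinj
        rw [show σ (g ((ε - τ) x)) = τ ((ε - τ) x) from rfl, h2, map_zero]
      -- membership of the j-th coordinate in S'
      have hScoord : ∀ x, πj (ψ ((ε - τ) x)) ∈ S' := by
        intro x
        have h4 := hgε2 x
        rw [hgapp] at h4
        have h5 : Submodule.linearProjOfIsCompl _ _ hcompl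
            ((πj ∘ₗ ψ ∘ₗ ε).rangeRestrict ((ε - τ) x)) = 0 :=
          (LinearEquiv.map_eq_zero_iff _).mp h4
        have h7 := (Submodule.linearProjOfIsCompl_apply_eq_zero_iff hcompl).mp h5
        have h8 : πj (ψ (ε ((ε - τ) x))) ∈ S' := h7
        rwa [show ε ((ε - τ) x) = (ε - τ) x from DFunLike.congr_fun hεε2 x] at h8
      have hsing2 : ∀ y ∈ LinearMap.range (ψ ∘ₗ (ε - τ)), ∀ i ∉ s,
          EssentialIn (LinearMap.ker (LinearMap.toSpanSingleton R R (y i))) ⊤ := by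
        rintro y ⟨x, rfl⟩ i hi
        rcases eq_or_ne i j with rfl | hij
        · have h3 := hScoord x
          have h9 := hS'sing ⟨πj (ψ ((ε - τ) x)), h3⟩
          have heq : LinearMap.ker (LinearMap.toSpanSingleton R R (((ψ ∘ₗ (ε - τ)) x) i))
              = LinearMap.ker (LinearMap.toSpanSingleton R ↥S' ⟨πj (ψ ((ε - τ) x)), h3⟩) := by
            ext r
            rw [LinearMap.mem_ker, LinearMap.mem_ker]
            constructor
            · intro hr
              apply Subtype.ext
              show r • (πj (ψ ((ε - τ) x))) = 0
              exact hr
            · intro hr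
              exact congrArg Subtype.val hr
          rw [heq]
          exact h9
        · have hy' : (ψ ∘ₗ (ε - τ)) x ∈ LinearMap.range (ψ ∘ₗ ε) := by
            refine ⟨(ε - τ) x, ?_⟩
            exact congrArg ψ (show ε ((ε - τ) x) = (ε - τ) x from DFunLike.congr_fun hεε2 x)
          refine hsing _ hy' i fun hmem => ?_
          rcases Finset.mem_insert.mp hmem with h | h
          · exact hij h
          · exact hi h
      obtain ⟨P, S, hPbot, hindep, hsupP, hPproj, hSsing⟩ := ih (ε - τ) hidem2' hsing2
      set Pj : Submodule R (Fin n → R) := (LinearMap.range τ).map ψ with hPjdef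
      have hψτinj : ∀ x ∈ LinearMap.range τ, ψ x = 0 → x = 0 := by
        rintro x ⟨z, rfl⟩ hx
        have h1 : ε (τ z) = τ z := DFunLike.congr_fun hετ z
        have h2 : (πj ∘ₗ ψ ∘ₗ ε).rangeRestrict (τ z) = 0 := by
          apply Subtype.ext
          show πj (ψ (ε (τ z))) = 0
          rw [h1, hx, map_zero]
        have h3 : g (τ z) = 0 := by rw [hgapp, h2]; simp
        have h4 : g (τ z) = g z := by
          show g (σ (g z)) = g z
          rw [hgσ]
        show τ z = 0
        rw [hτapp, show g z = 0 from by rw [← h4]; exact h3, map_zero]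
      have hPjdisj : Pj ⊓ LinearMap.range (ψ ∘ₗ (ε - τ)) = ⊥ := by
        rw [Submodule.eq_bot_iff]
        rintro w ⟨⟨u, hu, rfl⟩, x2, hx2⟩
        obtain ⟨z, rfl⟩ := hu
        have h1 : (πj ∘ₗ ψ ∘ₗ ε).rangeRestrict (τ z)
            = (πj ∘ₗ ψ ∘ₗ ε).rangeRestrict ((ε - τ) x2) := by
          apply Subtype.ext
          show πj (ψ (ε (τ z))) = πj (ψ (ε ((ε - τ) x2)))
          rw [show ε (τ z) = τ z from DFunLike.congr_fun hετ z,
            show ε ((ε - τ) x2) = (ε - τ) x2 from DFunLike.congr_fun hεε2 x2]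
          exact congrArg πj hx2.symm
        have h2 : g (τ z) = g ((ε - τ) x2) := by rw [hgapp, hgapp, h1]
        have h3 : g (τ z) = g z := by
          show g (σ (g z)) = g z
          rw [hgσ]
        have h5 : τ z = 0 := by
          rw [hτapp, show g z = 0 from by rw [← h3, h2, hgε2 x2], map_zero]
        rw [h5, map_zero]
      have hrange_dec : LinearMap.range (ψ ∘ₗ ε)
          = LinearMap.range (ψ ∘ₗ (ε - τ)) ⊔ Pj := by
        rw [LinearMap.range_comp, LinearMap.range_comp, ← hsup2, Submodule.map_sup]
      refine ⟨Function.update P j Pj, S, ?_, ?_, ?_, ?_, hSsing⟩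
      · intro i hi
        have hij : i ≠ j := fun hh => hi (hh ▸ Finset.mem_insert_self j s)
        rw [Function.update_of_ne hij]
        exact hPbot i fun hh => hi (Finset.mem_insert_of_mem hh)
      · have hfeq : (fun o : Option (Fin n) => o.elim S (Function.update P j Pj))
            = Function.update (fun o : Option (Fin n) => o.elim S P) (some j) Pj := by
          funext o
          rcases o with _ | i
          · rw [Function.update_of_ne (by simp)]
            rfl
          · rcases eq_or_ne i j with rfl | hij
            · rw [Function.update_self]
              show Function.update P i Pj i = Pj
              rw [Function.update_self]
            · rw [Function.update_of_ne (by simpa using hij)]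
              show Function.update P j Pj i = P i
              rw [Function.update_of_ne hij]
        rw [hfeq]
        refine iSupIndep_extend hindep ?_ ?_
        · show P j = ⊥
          exact hPbot j hj
        · have hsupf : (⨆ o : Option (Fin n), (Option.elim o S P))
              = LinearMap.range (ψ ∘ₗ (ε - τ)) := by
            rw [iSup_option (f := fun o : Option (Fin n) => Option.elim o S P)]
            rw [sup_comm]
            exact hsupP
          rw [hsupf]
          exact hPjdisj
      · have hupdate : (⨆ i, Function.update P j Pj i) = Pj ⊔ ⨆ i, P i := by
          apply le_antisymm
          · refine iSup_le fun i => ?_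
            rcases eq_or_ne i j with rfl | hij
            · rw [Function.update_self]
              exact le_sup_left
            · rw [Function.update_of_ne hij]
              exact le_trans (le_iSup P i) le_sup_right
          · refine sup_le ?_ (iSup_le fun i => ?_)
            · have h1 := le_iSup (Function.update P j Pj) j
              rwa [Function.update_self] at h1
            · rcases eq_or_ne i j with rfl | hij
              · rw [hPbot i hj]
                exact bot_le
              · have h1 := le_iSup (Function.update P j Pj) i
                rwa [Function.update_of_ne hij] at h1
        rw [hupdate, hrange_dec, sup_assoc, hsupP,
          sup_comm Pj (LinearMap.range (ψ ∘ₗ (ε - τ)))]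
      · intro i
        rcases eq_or_ne i j with rfl | hij
        · rw [Function.update_self]
          constructor
          · haveI := projective_range_idem (M := Fin n → R) (R := R) hττ
            have hinjψ : Function.Injective (ψ.domRestrict (LinearMap.range τ)) := by
              rw [← LinearMap.ker_eq_bot, Submodule.eq_bot_iff]
              rintro ⟨x, hx⟩ hk
              exact Subtype.ext (hψτinj x hx hk)
            have heqr : LinearMap.range (ψ.domRestrict (LinearMap.range τ)) = Pj :=
              LinearMap.range_domRestrict _ _
            rw [← heqr]
            exact Module.Projective.of_equiv (LinearEquiv.ofInjective _ hinjψ)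
          · have hinjπ : Function.Injective (πj.domRestrict Pj) := by
              rw [← LinearMap.ker_eq_bot, Submodule.eq_bot_iff]
              rintro ⟨w, hw⟩ hk
              obtain ⟨u, hu, rfl⟩ := hw
              obtain ⟨z, rfl⟩ := hu
              have hk' : πj (ψ (τ z)) = 0 := hk
              have h1 : (πj ∘ₗ ψ ∘ₗ ε).rangeRestrict (τ z) = 0 := by
                apply Subtype.ext
                show πj (ψ (ε (τ z))) = 0
                rw [show ε (τ z) = τ z from DFunLike.congr_fun hετ z]
                exact hk'
              have h3 : g (τ z) = 0 := by rw [hgapp, h1]; simp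
              have h4 : g (τ z) = g z := by
                show g (σ (g z)) = g z
                rw [hgσ]
              have h5 : τ z = 0 := by
                rw [hτapp, show g z = 0 from by rw [← h4]; exact h3, map_zero]
              apply Subtype.ext
              show ψ (τ z) = 0
              rw [h5, map_zero]
            exact ⟨LinearMap.range (πj.domRestrict Pj), ⟨LinearEquiv.ofInjective _ hinjπ⟩⟩
        · rw [Function.update_of_ne hij]
          exact hPproj i
  obtain ⟨P, S, _, hindep, hsup, hPproj, hSsing⟩ := AUX Finset.univ 1 (one_mul 1)
    (fun y _ i hi => absurd (Finset.mem_univ i) hi)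
  refine ⟨P, S, hindep, ?_, hPproj, hSsing⟩
  rw [hsup, show ψ ∘ₗ (1 : Module.End R (Fin n → R)) = ψ from LinearMap.comp_id ψ, hψrange]

end Imps6


/-- For a ring `R` and fixed `n`, the six conditions of Theorem 4.3 are
equivalent: `n`-generated projective modules are CS-Rickart, `R^(n)` is
CS-Rickart, `Matₙ(R)` is an ACS ring, `n`-generated ideals decompose as
`P ⊕ S`, `R^(n)` is relatively CS-Rickart to `R`, and `n`-generated submodules
of `R^(n)` decompose as `P₁ ⊕ … ⊕ Pₙ ⊕ S`. -/
theorem matrix_acs_tfae {R : Type u} [Ring R] (n : ℕ) :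
    List.TFAE
      [ ∀ (P : Type u) [AddCommGroup P] [Module R P],
          Module.Projective R P → NGen n (⊤ : Submodule R P) → IsCSRickart R P,
        IsCSRickart R (Fin n → R),
        IsACSRing (Matrix (Fin n) (Fin n) R),
        ∀ I : Submodule R R, NGen n I →
          ∃ P S : Submodule R R, Module.Projective R P ∧ IsSingularModule R S ∧
            P ⊓ S = ⊥ ∧ P ⊔ S = I,
        IsRelCSRickart R (Fin n → R) R,
        ∀ N : Submodule R (Fin n → R), NGen n N →
          ∃ (P : Fin n → Submodule R (Fin n → R)) (S : Submodule R (Fin n → R)),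
            iSupIndep (fun o : Option (Fin n) => o.elim S P) ∧
            ((⨆ i, P i) ⊔ S = N) ∧
            (∀ i, Module.Projective R (P i) ∧
              ∃ J : Submodule R R, Nonempty ((P i) ≃ₗ[R] J)) ∧
            IsSingularModule R S ] := by
  tfae_have 1 → 2 := fun h1 => h1 (Fin n → R) inferInstance ngen_top_pi
  tfae_have 2 → 1 := by
    intro h2 P instG instM hproj hgen
    exact imp21 h2 P hproj hgen
  tfae_have 2 → 3 := imp23
  tfae_have 3 → 2 := imp32
  tfae_have 2 → 5 := imp25
  tfae_have 5 → 2 := imp52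
  tfae_have 5 → 4 := imp54
  tfae_have 4 → 5 := imp45
  tfae_have 4 → 6 := imp46
  tfae_have 6 → 4 := imp64
  tfae_finish

end CSRickartPaper
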